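/- If M and N are models of KP^P and N is a powerset-preserving end extension of M, then N is a rank extension of M: for all x, y ∈ N, if y ∈ M and N ⊨ ρ(x) ≤ ρ(y), then x ∈ M. -/

import Mathlib

universe u

/-- de Bruijn-style formulas of the language of set theory, with primitive
bounded quantifiers (`∈`-bounded and `⊆`-bounded) and unbounded quantifiers.
`SF n` is the type of formulas with (at most) `n` free variables. -/
inductive SF : ℕ → Type
  | mem {n} (i j : Fin n) : SF n
  | eq {n} (i j : Fin n) : SF n
  | not {n} (φ : SF n) : SF n
  | and {n} (φ ψ : SF n) : SF n
  | or {n} (φ ψ : SF n) : SF n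
  | bexMem {n} (i : Fin n) (φ : SF (n + 1)) : SF n
  | ballMem {n} (i : Fin n) (φ : SF (n + 1)) : SF n
  | bexSub {n} (i : Fin n) (φ : SF (n + 1)) : SF n
  | ballSub {n} (i : Fin n) (φ : SF (n + 1)) : SF n
  | ex {n} (φ : SF (n + 1)) : SF n
  | all {n} (φ : SF (n + 1)) : SF n

variable {X : Type u}

/-- `a ⊆ b` in the structure `⟨X, E⟩`. -/
def SubE (E : X → X → Prop) (a b : X) : Prop := ∀ z, E z a → E z b

/-- Satisfaction of a formula in the structure `⟨X, E⟩` under a valuation. -/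
def SF.Eval (E : X → X → Prop) : {n : ℕ} → SF n → (Fin n → X) → Prop
  | _, .mem i j, v => E (v i) (v j)
  | _, .eq i j, v => v i = v j
  | _, .not φ, v => ¬ φ.Eval E v
  | _, .and φ ψ, v => φ.Eval E v ∧ ψ.Eval E v
  | _, .or φ ψ, v => φ.Eval E v ∨ ψ.Eval E v
  | _, .bexMem i φ, v => ∃ x, E x (v i) ∧ φ.Eval E (Fin.snoc v x)
  | _, .ballMem i φ, v => ∀ x, E x (v i) → φ.Eval E (Fin.snoc v x)
  | _, .bexSub i φ, v => ∃ x, SubE E x (v i) ∧ φ.Eval E (Fin.snoc v x)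
  | _, .ballSub i φ, v => ∀ x, SubE E x (v i) → φ.Eval E (Fin.snoc v x)
  | _, .ex φ, v => ∃ x, φ.Eval E (Fin.snoc v x)
  | _, .all φ, v => ∀ x, φ.Eval E (Fin.snoc v x)

/-- `Δ₀` formulas: only `∈`-bounded quantifiers. -/
def SF.IsDelta0 : {n : ℕ} → SF n → Prop
  | _, .mem _ _ => True
  | _, .eq _ _ => True
  | _, .not φ => φ.IsDelta0
  | _, .and φ ψ => φ.IsDelta0 ∧ ψ.IsDelta0
  | _, .or φ ψ => φ.IsDelta0 ∧ ψ.IsDelta0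
  | _, .bexMem _ φ => φ.IsDelta0
  | _, .ballMem _ φ => φ.IsDelta0
  | _, .bexSub _ _ => False
  | _, .ballSub _ _ => False
  | _, .ex _ => False
  | _, .all _ => False

/-- Takahashi's class `Δ₀^𝒫`: only `∈`-bounded and `⊆`-bounded quantifiers. -/
def SF.IsDelta0P : {n : ℕ} → SF n → Prop
  | _, .mem _ _ => True
  | _, .eq _ _ => True
  | _, .not φ => φ.IsDelta0P
  | _, .and φ ψ => φ.IsDelta0P ∧ ψ.IsDelta0P
  | _, .or φ ψ => φ.IsDelta0P ∧ ψ.IsDelta0P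
  | _, .bexMem _ φ => φ.IsDelta0P
  | _, .ballMem _ φ => φ.IsDelta0P
  | _, .bexSub _ φ => φ.IsDelta0P
  | _, .ballSub _ φ => φ.IsDelta0P
  | _, .ex _ => False
  | _, .all _ => False

def Delta0C : ∀ n, SF n → Prop := fun _ φ => φ.IsDelta0
def Delta0PC : ∀ n, SF n → Prop := fun _ φ => φ.IsDelta0P
def Sigma1C : ∀ n, SF n → Prop := fun _ φ => ∃ ψ, ψ.IsDelta0 ∧ φ = SF.ex ψ
def Pi1C : ∀ n, SF n → Prop := fun _ φ => ∃ ψ, ψ.IsDelta0 ∧ φ = SF.all ψ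
def Sigma1PC : ∀ n, SF n → Prop := fun _ φ => ∃ ψ, ψ.IsDelta0P ∧ φ = SF.ex ψ
def Pi1PC : ∀ n, SF n → Prop := fun _ φ => ∃ ψ, ψ.IsDelta0P ∧ φ = SF.all ψ
def FullC : ∀ n, SF n → Prop := fun _ _ => True

/-- A Gödel numbering of formulas. -/
def SF.encode : {n : ℕ} → SF n → ℕ
  | _, .mem i j => Nat.pair 0 (Nat.pair i.val j.val)
  | _, .eq i j => Nat.pair 1 (Nat.pair i.val j.val)
  | _, .not φ => Nat.pair 2 φ.encode
  | _, .and φ ψ => Nat.pair 3 (Nat.pair φ.encode ψ.encode)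
  | _, .or φ ψ => Nat.pair 4 (Nat.pair φ.encode ψ.encode)
  | _, .bexMem i φ => Nat.pair 5 (Nat.pair i.val φ.encode)
  | _, .ballMem i φ => Nat.pair 6 (Nat.pair i.val φ.encode)
  | _, .bexSub i φ => Nat.pair 7 (Nat.pair i.val φ.encode)
  | _, .ballSub i φ => Nat.pair 8 (Nat.pair i.val φ.encode)
  | _, .ex φ => Nat.pair 9 φ.encode
  | _, .all φ => Nat.pair 10 φ.encode

/-- A theory (set of sentences) is recursively enumerable if the set of Gödel
numbers of its members is the domain of a partial recursive function. -/
def REset (S : Set (SF 0)) : Prop :=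
  ∃ f : ℕ →. ℕ, Nat.Partrec f ∧ ∀ φ : SF 0, φ ∈ S ↔ SF.encode φ ∈ f.Dom

/-- `⟨X, E⟩ ⊨ S` for a set `S` of sentences. -/
def SatT (E : X → X → Prop) (S : Set (SF 0)) : Prop :=
  ∀ φ ∈ S, SF.Eval E φ (fun i => i.elim0)

/-! ## Axioms and axiom schemes -/

def ExtensionalityAx (E : X → X → Prop) : Prop := ∀ a b, (∀ z, E z a ↔ E z b) → a = b
def EmptySetAx (E : X → X → Prop) : Prop := ∃ a, ∀ z, ¬ E z a
def PairAx (E : X → X → Prop) : Prop := ∀ x y, ∃ a, ∀ z, E z a ↔ (z = x ∨ z = y)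
def UnionAx (E : X → X → Prop) : Prop := ∀ a, ∃ b, ∀ z, E z b ↔ ∃ y, E y a ∧ E z y
def SetDiffAx (E : X → X → Prop) : Prop := ∀ a b, ∃ c, ∀ z, E z c ↔ (E z a ∧ ¬ E z b)
def PowerAx (E : X → X → Prop) : Prop := ∀ a, ∃ p, ∀ z, E z p ↔ SubE E z a
def TransSet (E : X → X → Prop) (t : X) : Prop := ∀ y, E y t → ∀ z, E z y → E z t
def TCoAx (E : X → X → Prop) : Prop := ∀ a, ∃ t, TransSet E t ∧ SubE E a t
def SuccOf (E : X → X → Prop) (x s : X) : Prop := ∀ z, E z s ↔ (E z x ∨ z = x)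
def InductiveSet (E : X → X → Prop) (a : X) : Prop :=
  (∃ e, E e a ∧ ∀ z, ¬ E z e) ∧ ∀ x, E x a → ∃ s, E s a ∧ SuccOf E x s
def InfinityAx (E : X → X → Prop) : Prop := ∃ a, InductiveSet E a
def SetFoundationAx (E : X → X → Prop) : Prop :=
  ∀ z, (∃ x, E x z) → ∃ y, E y z ∧ ∀ x, E x y → ¬ E x z
/-- The axiom of choice: every set of pairwise disjoint nonempty sets has a transversal. -/
def ACAx (E : X → X → Prop) : Prop :=
  ∀ a, (∀ x, E x a → ∃ z, E z x) →
    (∀ x y, E x a → E y a → x ≠ y → ∀ z, E z x → ¬ E z y) →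
    ∃ c, ∀ x, E x a → ∃! z, E z c ∧ E z x

def SeparationScheme (E : X → X → Prop) (C : ∀ n, SF n → Prop) : Prop :=
  ∀ (n : ℕ) (φ : SF (n + 1)), C _ φ → ∀ (p : Fin n → X) (w : X),
    ∃ y, ∀ x, E x y ↔ (E x w ∧ φ.Eval E (Fin.snoc p x))

def CollectionScheme (E : X → X → Prop) (C : ∀ n, SF n → Prop) : Prop :=
  ∀ (n : ℕ) (φ : SF (n + 2)), C _ φ → ∀ (p : Fin n → X) (w : X),
    (∀ x, E x w → ∃ y, φ.Eval E (Fin.snoc (Fin.snoc p x) y)) →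
    ∃ c, ∀ x, E x w → ∃ y, E y c ∧ φ.Eval E (Fin.snoc (Fin.snoc p x) y)

def FoundationScheme (E : X → X → Prop) (C : ∀ n, SF n → Prop) : Prop :=
  ∀ (n : ℕ) (φ : SF (n + 1)), C _ φ → ∀ p : Fin n → X,
    (∃ x, φ.Eval E (Fin.snoc p x)) →
    ∃ y, φ.Eval E (Fin.snoc p y) ∧ ∀ x, E x y → ¬ φ.Eval E (Fin.snoc p x)

/-! ## Theories -/

def ModelMminus (E : X → X → Prop) : Prop :=
  ExtensionalityAx E ∧ EmptySetAx E ∧ PairAx E ∧ UnionAx E ∧ SetDiffAx E ∧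
    TCoAx E ∧ InfinityAx E ∧ SeparationScheme E Delta0C ∧ SetFoundationAx E

def ModelM (E : X → X → Prop) : Prop := ModelMminus E ∧ PowerAx E

def ModelKP (E : X → X → Prop) : Prop :=
  ExtensionalityAx E ∧ PairAx E ∧ UnionAx E ∧ SeparationScheme E Delta0C ∧
    CollectionScheme E Delta0C ∧ FoundationScheme E Pi1C

def ModelKPP (E : X → X → Prop) : Prop :=
  ModelM E ∧ CollectionScheme E Delta0PC ∧ FoundationScheme E Pi1PC

def ModelMOST (E : X → X → Prop) : Prop :=
  ModelM E ∧ SeparationScheme E Sigma1C ∧ ACAx E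

def ModelZF (E : X → X → Prop) : Prop :=
  ExtensionalityAx E ∧ EmptySetAx E ∧ PairAx E ∧ UnionAx E ∧ PowerAx E ∧
    InfinityAx E ∧ SeparationScheme E FullC ∧ CollectionScheme E FullC ∧
    FoundationScheme E FullC

/-! ## Internal set-theoretic machinery -/

/-- `p = {{x}, {x, y}}` (Kuratowski pair). -/
def IsPair (E : X → X → Prop) (p x y : X) : Prop :=
  ∀ z, E z p ↔ ((∀ w, E w z ↔ w = x) ∨ (∀ w, E w z ↔ (w = x ∨ w = y)))

def FunApp (E : X → X → Prop) (f x y : X) : Prop := ∃ q, E q f ∧ IsPair E q x y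

/-- `f` is a function with domain `d`. -/
def IsFuncOn (E : X → X → Prop) (f d : X) : Prop :=
  (∀ q, E q f → ∃ x y, IsPair E q x y ∧ E x d) ∧
  (∀ x y y', FunApp E f x y → FunApp E f x y' → y = y') ∧
  (∀ x, E x d → ∃ y, FunApp E f x y)

/-- `f` is an injective function from `dom` into `cod`. -/
def InjFunInto (E : X → X → Prop) (f dom cod : X) : Prop :=
  IsFuncOn E f dom ∧ (∀ x y, FunApp E f x y → E y cod) ∧
  (∀ x x' y, FunApp E f x y → FunApp E f x' y → x = x')

/-- `|t| ≤ |κ|`. -/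
def CardLe (E : X → X → Prop) (t κ : X) : Prop := ∃ f, InjFunInto E f t κ

def IsOrdinal (E : X → X → Prop) (x : X) : Prop :=
  TransSet E x ∧ ∀ y, E y x → TransSet E y

/-- An (initial ordinal =) cardinal: an ordinal that does not inject into any of
its members. -/
def IsCardinal (E : X → X → Prop) (κ : X) : Prop :=
  IsOrdinal E κ ∧ ∀ β, E β κ → ¬ CardLe E κ β

/-- `t` is the transitive closure of the set `x`. -/
def IsTCset (E : X → X → Prop) (t x : X) : Prop :=
  TransSet E t ∧ SubE E x t ∧ ∀ u, TransSet E u → SubE E x u → SubE E t u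

/-- `t` is the transitive closure of `{x}`. -/
def IsTCsingleton (E : X → X → Prop) (t x : X) : Prop :=
  TransSet E t ∧ E x t ∧ ∀ u, TransSet E u → E x u → SubE E t u

def IsOmega (E : X → X → Prop) (w : X) : Prop :=
  InductiveSet E w ∧ ∀ a, InductiveSet E a → SubE E w a

/-- `⟨X, E⟩` is `ω`-standard: its internal natural numbers are order-isomorphic
to the standard natural numbers. -/
def OmegaStandard (E : X → X → Prop) : Prop :=
  ∀ w, IsOmega E w → ∃ f : ℕ → X, (∀ n, E (f n) w) ∧ (∀ x, E x w → ∃ n, x = f n) ∧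
    ∀ m n : ℕ, (E (f m) (f n) ↔ m < n)

/-- `f` is (a function coding) the cumulative hierarchy `β ↦ V_β` for `β ∈ α`,
using `V_β = ⋃_{γ∈β} 𝒫(V_γ)`. -/
def IsRK (E : X → X → Prop) (α f : X) : Prop :=
  IsOrdinal E α ∧ IsFuncOn E f α ∧
  ∀ β vβ, E β α → FunApp E f β vβ →
    ∀ x, E x vβ ↔ ∃ γ, E γ β ∧ ∃ vγ, FunApp E f γ vγ ∧ SubE E x vγ

/-- Internal rank comparison `ρ(x) ≤ ρ(y)`: `x` belongs to every stage of the
cumulative hierarchy that `y` belongs to. -/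
def RankLe (E : X → X → Prop) (x y : X) : Prop :=
  ∀ α f β v, IsRK E α f → E β α → FunApp E f β v → E y v → E x v

/-- External `n`-th von Neumann natural number. -/
def IsVN (E : X → X → Prop) : ℕ → X → Prop
  | 0, x => ∀ z, ¬ E z x
  | (n + 1), x => ∃ y, IsVN E n y ∧ SuccOf E y x

/-- `a` is the `n`-th infinite cardinal `ℵ_n` (for external `n`, as computed in
the model): `ℵ₀ = ω`, and `ℵ_{n+1}` is the least cardinal above `ℵ_n`. -/
def IsAleph (E : X → X → Prop) : ℕ → X → Prop
  | 0, a => IsOmega E a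
  | (n + 1), a => ∃ b, IsAleph E n b ∧ IsCardinal E a ∧ E b a ∧
      ∀ c, IsCardinal E c → E b c → (c = a ∨ E a c)

/-- `a` is the cardinal `ℵ_ω` of the model: the least limit cardinal above `ω`. -/
def IsAlephOmega (E : X → X → Prop) (a : X) : Prop :=
  (IsCardinal E a ∧ (∃ w, IsOmega E w ∧ E w a) ∧
    (∀ β, E β a → ∃ μ, IsCardinal E μ ∧ E β μ ∧ E μ a)) ∧
  ∀ a', (IsCardinal E a' ∧ (∃ w, IsOmega E w ∧ E w a') ∧
    (∀ β, E β a' → ∃ μ, IsCardinal E μ ∧ E β μ ∧ E μ a')) → (a = a' ∨ E a a')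

/-! ## Internal satisfaction and the constructible hierarchy (for `V = L`) -/

/-- `c = ⟨n, a⟩` with the tag `n` an external natural (internally coded). -/
def TaggedBy (E : X → X → Prop) (c : X) (n : ℕ) (a : X) : Prop :=
  ∃ t, IsVN E n t ∧ IsPair E c t a

def CodeMem (E : X → X → Prop) (c i j : X) : Prop := ∃ p, IsPair E p i j ∧ TaggedBy E c 0 p
def CodeEq (E : X → X → Prop) (c i j : X) : Prop := ∃ p, IsPair E p i j ∧ TaggedBy E c 1 p
def CodeNot (E : X → X → Prop) (c' c : X) : Prop := TaggedBy E c' 2 c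
def CodeAnd (E : X → X → Prop) (c' c₁ c₂ : X) : Prop := ∃ p, IsPair E p c₁ c₂ ∧ TaggedBy E c' 3 p
def CodeEx (E : X → X → Prop) (c' i c : X) : Prop := ∃ p, IsPair E p i c ∧ TaggedBy E c' 4 p

/-- `d` is closed under the internal formation rules for codes of formulas with
variables indexed by elements of `w` (the internal `ω`). -/
def ClosedCode (E : X → X → Prop) (w d : X) : Prop :=
  (∀ i j c, E i w → E j w → CodeMem E c i j → E c d) ∧
  (∀ i j c, E i w → E j w → CodeEq E c i j → E c d) ∧
  (∀ c c', E c d → CodeNot E c' c → E c' d) ∧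
  (∀ c₁ c₂ c', E c₁ d → E c₂ d → CodeAnd E c' c₁ c₂ → E c' d) ∧
  (∀ i c c', E i w → E c d → CodeEx E c' i c → E c' d)

/-- `c` is an internal code of a first-order formula of the language of set theory. -/
def FormCode (E : X → X → Prop) (w c : X) : Prop := ∀ d, ClosedCode E w d → E c d

/-- An internal assignment of elements of `a` to the variables. -/
def IsAssign (E : X → X → Prop) (w a v : X) : Prop :=
  IsFuncOn E v w ∧ ∀ i y, FunApp E v i y → E y a

/-- `v' = v[i ↦ x]`. -/
def UpdateAssign (E : X → X → Prop) (w v : X) (i x v' : X) : Prop :=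
  FunApp E v' i x ∧ ∀ j, E j w → j ≠ i → ∀ y, (FunApp E v j y ↔ FunApp E v' j y)

def PairIn (E : X → X → Prop) (s c v : X) : Prop := ∃ q, E q s ∧ IsPair E q c v

/-- `s` is a (full) satisfaction class for the set structure `⟨a, E⟩`: a set of
pairs ⟨code, assignment⟩ obeying the Tarski conditions. -/
def SatSet (E : X → X → Prop) (w a s : X) : Prop :=
  (∀ q, E q s → ∃ c v, IsPair E q c v ∧ FormCode E w c ∧ IsAssign E w a v) ∧
  (∀ i j c v xi xj, E i w → E j w → CodeMem E c i j → IsAssign E w a v →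
    FunApp E v i xi → FunApp E v j xj → (PairIn E s c v ↔ E xi xj)) ∧
  (∀ i j c v xi xj, E i w → E j w → CodeEq E c i j → IsAssign E w a v →
    FunApp E v i xi → FunApp E v j xj → (PairIn E s c v ↔ xi = xj)) ∧
  (∀ c c' v, FormCode E w c → CodeNot E c' c → IsAssign E w a v →
    (PairIn E s c' v ↔ ¬ PairIn E s c v)) ∧
  (∀ c₁ c₂ c' v, FormCode E w c₁ → FormCode E w c₂ → CodeAnd E c' c₁ c₂ →
    IsAssign E w a v → (PairIn E s c' v ↔ (PairIn E s c₁ v ∧ PairIn E s c₂ v))) ∧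
  (∀ i c c' v, E i w → FormCode E w c → CodeEx E c' i c → IsAssign E w a v →
    (PairIn E s c' v ↔ ∃ x v', E x a ∧ IsAssign E w a v' ∧ UpdateAssign E w v i x v' ∧
      PairIn E s c v'))

/-- `b` is a subset of `a` definable over `⟨a, E⟩` (with parameters from `a`). -/
def DefSub (E : X → X → Prop) (w a s b : X) : Prop :=
  SubE E b a ∧ ∃ c, FormCode E w c ∧ ∃ v, IsAssign E w a v ∧ ∃ i, E i w ∧
    ∀ x, E x b ↔ (E x a ∧ ∃ v', IsAssign E w a v' ∧ UpdateAssign E w v i x v' ∧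
      PairIn E s c v')

/-- `f` codes the constructible hierarchy `β ↦ L_β` for `β ∈ α`, using
`L_β = ⋃_{γ∈β} Def(L_γ)`. -/
def IsLHier (E : X → X → Prop) (w f α : X) : Prop :=
  IsOrdinal E α ∧ IsFuncOn E f α ∧
  ∀ β vβ, E β α → FunApp E f β vβ →
    ∀ x, E x vβ ↔ ∃ γ, E γ β ∧ ∃ vγ, FunApp E f γ vγ ∧ ∃ s, SatSet E w vγ s ∧
      DefSub E w vγ s x

/-- The axiom `V = L`: every set belongs to some level of the constructible hierarchy. -/
def VeqL (E : X → X → Prop) : Prop :=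
  ∀ w, IsOmega E w → ∀ x, ∃ α f β vβ, IsLHier E w f α ∧ E β α ∧ FunApp E f β vβ ∧ E x vβ

/-! ## Extensions -/

/-- The substructure of `⟨X, E⟩` with underlying set `A`. -/
def restrict (E : X → X → Prop) (A : Set X) : A → A → Prop := fun a b => E a.1 b.1

/-- `B` is an end extension of `A` (both substructures of an ambient `⟨X, E⟩`). -/
def EndExtIn (E : X → X → Prop) (A B : Set X) : Prop :=
  A ⊆ B ∧ ∀ x y, x ∈ B → y ∈ A → E x y → x ∈ A

/-- `B` is a powerset-preserving end extension of `A` (within an ambient `⟨X, E⟩`);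
`x ⊆ y` is computed in `B`. -/
def PowExtIn (E : X → X → Prop) (A B : Set X) : Prop :=
  EndExtIn E A B ∧ ∀ x y, x ∈ B → y ∈ A → (∀ z, z ∈ B → E z x → E z y) → x ∈ A

/-- The whole structure `⟨X, E⟩` is an end extension of its substructure on `A`. -/
def EndExtSet (E : X → X → Prop) (A : Set X) : Prop :=
  ∀ x y, y ∈ A → E x y → x ∈ A

/-- `⟨X, E⟩` is a powerset-preserving end extension of its substructure on `A`. -/
def PowExtSet (E : X → X → Prop) (A : Set X) : Prop :=
  EndExtSet E A ∧ ∀ x y, y ∈ A → SubE E x y → x ∈ A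

/-- `⟨X, E⟩` is a rank extension of its substructure on `A`. -/
def RankExtSet (E : X → X → Prop) (A : Set X) : Prop :=
  PowExtSet E A ∧ ∀ x y, y ∈ A → RankLe E x y → x ∈ A

/-- The extension `⟨X, E⟩` of its substructure on `A` is proper and topless. -/
def ToplessSet (E : X → X → Prop) (A : Set X) : Prop :=
  A ≠ Set.univ ∧ ∀ c, (∀ x, E x c → x ∈ A) → c ∈ A

/-- The extension `⟨X, E⟩` of its substructure on `A` is proper and blunt (not topless). -/
def BluntSet (E : X → X → Prop) (A : Set X) : Prop :=
  A ≠ Set.univ ∧ ¬ ToplessSet E A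

/-! ## Weak dependent choice -/

/-- `δ_ω^φ(b, f, p)`: `f` is a function on `ω` with `f(0) = {b}` tracing the
`φ`-successor relation. -/
def IsWDCWitness (E : X → X → Prop) {n : ℕ} (φ : SF (n + 2)) (p : Fin n → X)
    (w b f : X) : Prop :=
  IsFuncOn E f w ∧
  (∃ z v, (∀ u, ¬ E u z) ∧ E z w ∧ FunApp E f z v ∧ ∀ t, E t v ↔ t = b) ∧
  ∀ m m' vm vm', E m w → SuccOf E m m' → E m' w → FunApp E f m vm → FunApp E f m' vm' →
    ((∀ x, E x vm → ∃ y, E y vm' ∧ φ.Eval E (Fin.snoc (Fin.snoc p x) y)) ∧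
     (∀ y, E y vm' → ∀ x, E x vm → φ.Eval E (Fin.snoc (Fin.snoc p x) y)))

/-- The scheme `Δ₀^𝒫-WDC_ω`. -/
def WDComega (E : X → X → Prop) : Prop :=
  ∀ (n : ℕ) (φ : SF (n + 2)), Delta0PC _ φ → ∀ p : Fin n → X,
    (∀ x, ∃ y, φ.Eval E (Fin.snoc (Fin.snoc p x) y)) →
    ∀ w, IsOmega E w → ∀ b, ∃ f, IsWDCWitness E φ p w b f

/-! ## Internal well-founded extensional relations (for `H_{≤κ}`) -/

def RRel (E : X → X → Prop) (R a b : X) : Prop := ∃ p, E p R ∧ IsPair E p a b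

def RelOn (E : X → X → Prop) (R k : X) : Prop :=
  ∀ p, E p R → ∃ a b, IsPair E p a b ∧ E a k ∧ E b k

/-- `BFEXT(R, k)`: `R ⊆ k × k` is extensional on `k`, has a top element, and every
nonempty subset of `k` has an `R`-minimal element. -/
def BFEXT (E : X → X → Prop) (R k : X) : Prop :=
  RelOn E R k ∧
  (∀ a b, E a k → E b k → (∀ c, E c k → (RRel E R c a ↔ RRel E R c b)) → a = b) ∧
  (∃ t, E t k ∧ ∀ b, E b k → b ≠ t → RRel E R b t) ∧
  (∀ S, SubE E S k → (∃ z, E z S) → ∃ m, E m S ∧ ∀ y, E y S → ¬ RRel E R y m)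

/-- `f` is an isomorphism of `⟨k, R⟩` with `⟨T, ∈⟩`. -/
def IsoOnto (E : X → X → Prop) (R k f T : X) : Prop :=
  IsFuncOn E f k ∧ (∀ x y, FunApp E f x y → E y T) ∧
  (∀ y, E y T → ∃ x, E x k ∧ FunApp E f x y) ∧
  (∀ x x' y, FunApp E f x y → FunApp E f x' y → x = x') ∧
  ∀ a b ya yb, E a k → E b k → FunApp E f a ya → FunApp E f b yb →
    (RRel E R a b ↔ E ya yb)

/-- The predicate `Xv = H_{≤κ} = {x : |TC(x)| ≤ κ}`. -/
def HleqPred (E : X → X → Prop) (Xv κ : X) : Prop :=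
  IsCardinal E κ ∧ ∀ x, E x Xv ↔ ∃ t, IsTCset E t x ∧ CardLe E t κ

/-- The explicit conjunction (i) ∧ (ii) ∧ (iii) asserting `Xv = H_{≤κ}`. -/
def ExplicitH (E : X → X → Prop) (Xv κ : X) : Prop :=
  IsCardinal E κ ∧
  (∀ R, BFEXT E R κ → ∃ x f T, E x Xv ∧ E f Xv ∧ E T Xv ∧ IsTCsingleton E T x ∧
    IsoOnto E R κ f T) ∧
  (∀ x, E x Xv → ∃ T f, E T Xv ∧ E f Xv ∧ IsTCsingleton E T x ∧ InjFunInto E f T κ)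


namespace RankExtProof

variable {Y : Type u}

/-! ### Semantic bounded predicates -/

def Sng (E : Y → Y → Prop) (a x : Y) : Prop := E x a ∧ ∀ w, E w a → w = x
def Upr (E : Y → Y → Prop) (a x y : Y) : Prop :=
  E x a ∧ E y a ∧ ∀ w, E w a → w = x ∨ w = y
def KPr (E : Y → Y → Prop) (p x y : Y) : Prop :=
  (∃ z, E z p ∧ Sng E z x) ∧ (∃ z, E z p ∧ Upr E z x y) ∧
  ∀ z, E z p → Sng E z x ∨ Upr E z x y
def FAx (E : Y → Y → Prop) (f x y : Y) : Prop := ∃ q, E q f ∧ KPr E q x y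
def Trn (E : Y → Y → Prop) (t : Y) : Prop := ∀ y, E y t → ∀ z, E z y → E z t
def OrdP (E : Y → Y → Prop) (a : Y) : Prop := Trn E a ∧ ∀ y, E y a → Trn E y

/-! ### Formula builders -/


section EvalEqs
variable {Y : Type u} {n : ℕ} (E : Y → Y → Prop)

@[simp] lemma eval_mem' (i j : Fin n) (v : Fin n → Y) :
    (SF.mem i j).Eval E v ↔ E (v i) (v j) := Iff.rfl
@[simp] lemma eval_eq' (i j : Fin n) (v : Fin n → Y) :
    (SF.eq i j).Eval E v ↔ v i = v j := Iff.rfl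
@[simp] lemma eval_not' (φ : SF n) (v : Fin n → Y) :
    (SF.not φ).Eval E v ↔ ¬ φ.Eval E v := Iff.rfl
@[simp] lemma eval_and' (φ ψ : SF n) (v : Fin n → Y) :
    (SF.and φ ψ).Eval E v ↔ (φ.Eval E v ∧ ψ.Eval E v) := Iff.rfl
@[simp] lemma eval_or' (φ ψ : SF n) (v : Fin n → Y) :
    (SF.or φ ψ).Eval E v ↔ (φ.Eval E v ∨ ψ.Eval E v) := Iff.rfl
@[simp] lemma eval_bexMem' (i : Fin n) (φ : SF (n+1)) (v : Fin n → Y) :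
    (SF.bexMem i φ).Eval E v ↔ ∃ x, E x (v i) ∧ φ.Eval E (Fin.snoc v x) := Iff.rfl
@[simp] lemma eval_ballMem' (i : Fin n) (φ : SF (n+1)) (v : Fin n → Y) :
    (SF.ballMem i φ).Eval E v ↔ ∀ x, E x (v i) → φ.Eval E (Fin.snoc v x) := Iff.rfl
@[simp] lemma eval_bexSub' (i : Fin n) (φ : SF (n+1)) (v : Fin n → Y) :
    (SF.bexSub i φ).Eval E v ↔ ∃ x, SubE E x (v i) ∧ φ.Eval E (Fin.snoc v x) := Iff.rfl
@[simp] lemma eval_ballSub' (i : Fin n) (φ : SF (n+1)) (v : Fin n → Y) :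
    (SF.ballSub i φ).Eval E v ↔ ∀ x, SubE E x (v i) → φ.Eval E (Fin.snoc v x) := Iff.rfl
@[simp] lemma eval_ex' (φ : SF (n+1)) (v : Fin n → Y) :
    (SF.ex φ).Eval E v ↔ ∃ x, φ.Eval E (Fin.snoc v x) := Iff.rfl
@[simp] lemma eval_all' (φ : SF (n+1)) (v : Fin n → Y) :
    (SF.all φ).Eval E v ↔ ∀ x, φ.Eval E (Fin.snoc v x) := Iff.rfl
end EvalEqs

def SF.imp {n} (φ ψ : SF n) : SF n := .or (.not φ) ψ

lemma eval_imp {n} (E : Y → Y → Prop) (φ ψ : SF n) (v : Fin n → Y) :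
    (SF.imp φ ψ).Eval E v ↔ (φ.Eval E v → ψ.Eval E v) := by
  simp only [SF.imp, eval_or', eval_not', imp_iff_not_or]

lemma imp_delta0P {n} (φ ψ : SF n) (h1 : φ.IsDelta0P) (h2 : ψ.IsDelta0P) :
    (SF.imp φ ψ).IsDelta0P := ⟨h1, h2⟩

def sngAt {n} (a x : Fin n) : SF n :=
  (SF.mem x a).and (.ballMem a (.eq (Fin.last n) x.castSucc))

lemma eval_sngAt {n} (E : Y → Y → Prop) (a x : Fin n) (v : Fin n → Y) :
    (sngAt a x).Eval E v ↔ Sng E (v a) (v x) := by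
  simp only [sngAt, Sng, eval_and', eval_mem', eval_ballMem', eval_eq', Fin.snoc_castSucc, Fin.snoc_last]

lemma sngAt_delta0P {n} (a x : Fin n) : (sngAt a x).IsDelta0P := by
  simp [sngAt, SF.IsDelta0P]

def uprAt {n} (a x y : Fin n) : SF n :=
  (SF.mem x a).and ((SF.mem y a).and
    (.ballMem a ((SF.eq (Fin.last n) x.castSucc).or (SF.eq (Fin.last n) y.castSucc))))

lemma eval_uprAt {n} (E : Y → Y → Prop) (a x y : Fin n) (v : Fin n → Y) :
    (uprAt a x y).Eval E v ↔ Upr E (v a) (v x) (v y) := by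
  simp only [uprAt, Upr, eval_and', eval_mem', eval_ballMem', eval_or', eval_eq', Fin.snoc_castSucc, Fin.snoc_last]

lemma uprAt_delta0P {n} (a x y : Fin n) : (uprAt a x y).IsDelta0P := by
  simp [uprAt, SF.IsDelta0P]

def kprAt {n} (p x y : Fin n) : SF n :=
  (SF.bexMem p (sngAt (Fin.last n) x.castSucc)).and
  ((SF.bexMem p (uprAt (Fin.last n) x.castSucc y.castSucc)).and
   (SF.ballMem p ((sngAt (Fin.last n) x.castSucc).or (uprAt (Fin.last n) x.castSucc y.castSucc))))

lemma eval_kprAt {n} (E : Y → Y → Prop) (p x y : Fin n) (v : Fin n → Y) :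
    (kprAt p x y).Eval E v ↔ KPr E (v p) (v x) (v y) := by
  simp only [kprAt, KPr, eval_and', eval_bexMem', eval_ballMem', eval_or', eval_sngAt, eval_uprAt, Fin.snoc_castSucc, Fin.snoc_last]

lemma kprAt_delta0P {n} (p x y : Fin n) : (kprAt p x y).IsDelta0P := by
  refine ⟨?_, ?_, ?_⟩ <;>
    simp [SF.IsDelta0P, sngAt_delta0P, uprAt_delta0P]


def subAt {n} (x y : Fin n) : SF n := .ballMem x (SF.mem (Fin.last n) y.castSucc)

lemma eval_subAt {n} (E : Y → Y → Prop) (x y : Fin n) (v : Fin n → Y) :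
    (subAt x y).Eval E v ↔ SubE E (v x) (v y) := by
  simp only [subAt, SubE, eval_ballMem', eval_mem', Fin.snoc_castSucc, Fin.snoc_last]

lemma subAt_delta0P {n} (x y : Fin n) : (subAt x y).IsDelta0P := by
  simp [subAt, SF.IsDelta0P]

def trnAt {n} (t : Fin n) : SF n :=
  .ballMem t (.ballMem (Fin.last n) (SF.mem (Fin.last (n+1)) t.castSucc.castSucc))

lemma eval_trnAt {n} (E : Y → Y → Prop) (t : Fin n) (v : Fin n → Y) :
    (trnAt t).Eval E v ↔ Trn E (v t) := by
  simp only [trnAt, Trn, eval_ballMem', eval_mem', Fin.snoc_castSucc, Fin.snoc_last]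

lemma trnAt_delta0P {n} (t : Fin n) : (trnAt t).IsDelta0P := by
  simp [trnAt, SF.IsDelta0P]

def ordAt {n} (a : Fin n) : SF n := (trnAt a).and (.ballMem a (trnAt (Fin.last n)))

lemma eval_ordAt {n} (E : Y → Y → Prop) (a : Fin n) (v : Fin n → Y) :
    (ordAt a).Eval E v ↔ OrdP E (v a) := by
  simp only [ordAt, OrdP, eval_and', eval_ballMem', eval_trnAt, Fin.snoc_castSucc, Fin.snoc_last]

lemma ordAt_delta0P {n} (a : Fin n) : (ordAt a).IsDelta0P :=
  ⟨trnAt_delta0P _, trnAt_delta0P _⟩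

def faAt {n} (f x y : Fin n) : SF n :=
  .bexMem f (kprAt (Fin.last n) x.castSucc y.castSucc)

lemma eval_faAt {n} (E : Y → Y → Prop) (f x y : Fin n) (v : Fin n → Y) :
    (faAt f x y).Eval E v ↔ FAx E (v f) (v x) (v y) := by
  simp only [faAt, FAx, eval_bexMem', eval_kprAt, Fin.snoc_castSucc, Fin.snoc_last]

lemma faAt_delta0P {n} (f x y : Fin n) : (faAt f x y).IsDelta0P := kprAt_delta0P _ _ _

/-! functionality clauses -/

def Fn1 (E : Y → Y → Prop) (f d : Y) : Prop :=
  ∀ q, E q f → ∃ u, E u q ∧ ∃ x, E x u ∧ ∃ w, E w q ∧ ∃ y, E y w ∧ (KPr E q x y ∧ E x d)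

def Fn2 (E : Y → Y → Prop) (f : Y) : Prop :=
  ∀ q, E q f → ∀ q', E q' f → ∀ u, E u q → ∀ x, E x u → ∀ w, E w q → ∀ y, E y w →
  ∀ u', E u' q' → ∀ x', E x' u' → ∀ w', E w' q' → ∀ y', E y' w' →
  (KPr E q x y → KPr E q' x' y' → x = x' → y = y')

def Fn3 (E : Y → Y → Prop) (f d : Y) : Prop :=
  ∀ x, E x d → ∃ q, E q f ∧ ∃ w, E w q ∧ ∃ y, E y w ∧ KPr E q x y

def Full (E : Y → Y → Prop) (f b vb : Y) : Prop :=
  (∀ x, E x vb → ∃ g, E g b ∧ ∃ q, E q f ∧ ∃ w, E w q ∧ ∃ vg, E vg w ∧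
      (KPr E q g vg ∧ SubE E x vg)) ∧
  (∀ g, E g b → ∀ q, E q f → ∀ w, E w q → ∀ vg, E vg w →
      (KPr E q g vg → ∀ x, SubE E x vg → E x vb))

def RKD (E : Y → Y → Prop) (a f : Y) : Prop :=
  OrdP E a ∧ Fn1 E f a ∧ Fn2 E f ∧ Fn3 E f a ∧
  ∀ b, E b a → ∀ q, E q f → ∀ w, E w q → ∀ vb, E vb w → (KPr E q b vb → Full E f b vb)

def Good (E : Y → Y → Prop) (a f b vv x : Y) : Prop :=
  RKD E a f ∧ E b a ∧ FAx E f b vv ∧ E x vv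

def GoodT (E : Y → Y → Prop) (x t : Y) : Prop :=
  ∃ a, E a t ∧ ∃ f, E f t ∧ ∃ b, E b t ∧ ∃ vv, E vv t ∧ Good E a f b vv x

def fn1At {n} (f d : Fin n) : SF n :=
  .ballMem f <|
  .bexMem (Fin.last n) <|
  .bexMem (Fin.last (n+1)) <|
  .bexMem ((Fin.last n).castSucc.castSucc) <|
  .bexMem (Fin.last (n+3)) <|
  (kprAt ((Fin.last n).castSucc.castSucc.castSucc.castSucc)
         ((Fin.last (n+2)).castSucc.castSucc)
         (Fin.last (n+4))).and
  (SF.mem ((Fin.last (n+2)).castSucc.castSucc)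
          (d.castSucc.castSucc.castSucc.castSucc.castSucc))

lemma eval_fn1At {n} (E : Y → Y → Prop) (f d : Fin n) (v : Fin n → Y) :
    (fn1At f d).Eval E v ↔ Fn1 E (v f) (v d) := by
  simp only [fn1At, Fn1, eval_ballMem', eval_bexMem', eval_and', eval_mem', eval_kprAt, Fin.snoc_castSucc, Fin.snoc_last]

lemma fn1At_delta0P {n} (f d : Fin n) : (fn1At f d).IsDelta0P := by
  exact ⟨kprAt_delta0P _ _ _, trivial⟩

def fn2At {n} (f : Fin n) : SF n :=
  .ballMem f <|
  .ballMem f.castSucc <|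
  .ballMem (Fin.last n).castSucc <|
  .ballMem (Fin.last (n+2)) <|
  .ballMem (Fin.last n).castSucc.castSucc.castSucc <|
  .ballMem (Fin.last (n+4)) <|
  .ballMem (Fin.last (n+1)).castSucc.castSucc.castSucc.castSucc <|
  .ballMem (Fin.last (n+6)) <|
  .ballMem (Fin.last (n+1)).castSucc.castSucc.castSucc.castSucc.castSucc.castSucc <|
  .ballMem (Fin.last (n+8)) <|
  SF.imp (kprAt ((Fin.last n).castSucc.castSucc.castSucc.castSucc.castSucc.castSucc.castSucc.castSucc.castSucc)
                ((Fin.last (n+3)).castSucc.castSucc.castSucc.castSucc.castSucc.castSucc)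
                ((Fin.last (n+5)).castSucc.castSucc.castSucc.castSucc)) <|
  SF.imp (kprAt ((Fin.last (n+1)).castSucc.castSucc.castSucc.castSucc.castSucc.castSucc.castSucc.castSucc)
                ((Fin.last (n+7)).castSucc.castSucc)
                (Fin.last (n+9))) <|
  SF.imp (SF.eq ((Fin.last (n+3)).castSucc.castSucc.castSucc.castSucc.castSucc.castSucc)
                ((Fin.last (n+7)).castSucc.castSucc))
         (SF.eq ((Fin.last (n+5)).castSucc.castSucc.castSucc.castSucc)
                (Fin.last (n+9)))

lemma eval_fn2At {n} (E : Y → Y → Prop) (f : Fin n) (v : Fin n → Y) :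
    (fn2At f).Eval E v ↔ Fn2 E (v f) := by
  simp only [fn2At, Fn2, eval_ballMem', eval_imp, eval_eq', eval_kprAt, Fin.snoc_castSucc, Fin.snoc_last]

lemma fn2At_delta0P {n} (f : Fin n) : (fn2At f).IsDelta0P := by
  exact ⟨kprAt_delta0P _ _ _, kprAt_delta0P _ _ _, ⟨trivial, trivial⟩⟩

def fn3At {n} (f d : Fin n) : SF n :=
  .ballMem d <|
  .bexMem f.castSucc <|
  .bexMem (Fin.last (n+1)) <|
  .bexMem (Fin.last (n+2)) <|
  kprAt ((Fin.last (n+1)).castSucc.castSucc)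
        ((Fin.last n).castSucc.castSucc.castSucc)
        (Fin.last (n+3))

lemma eval_fn3At {n} (E : Y → Y → Prop) (f d : Fin n) (v : Fin n → Y) :
    (fn3At f d).Eval E v ↔ Fn3 E (v f) (v d) := by
  simp only [fn3At, Fn3, eval_ballMem', eval_bexMem', eval_kprAt, Fin.snoc_castSucc, Fin.snoc_last]

lemma fn3At_delta0P {n} (f d : Fin n) : (fn3At f d).IsDelta0P := kprAt_delta0P _ _ _

def fullAt {n} (f b vb : Fin n) : SF n :=
  (SF.ballMem vb <|
   .bexMem b.castSucc <|
   .bexMem f.castSucc.castSucc <|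
   .bexMem (Fin.last (n+2)) <|
   .bexMem (Fin.last (n+3)) <|
   (kprAt ((Fin.last (n+2)).castSucc.castSucc)
          ((Fin.last (n+1)).castSucc.castSucc.castSucc)
          (Fin.last (n+4))).and
   (subAt ((Fin.last n).castSucc.castSucc.castSucc.castSucc) (Fin.last (n+4)))).and
  (SF.ballMem b <|
   .ballMem f.castSucc <|
   .ballMem (Fin.last (n+1)) <|
   .ballMem (Fin.last (n+2)) <|
   SF.imp (kprAt ((Fin.last (n+1)).castSucc.castSucc)
                 ((Fin.last n).castSucc.castSucc.castSucc)
                 (Fin.last (n+3)))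
     (.ballSub (Fin.last (n+3))
        (SF.mem (Fin.last (n+4)) (vb.castSucc.castSucc.castSucc.castSucc.castSucc))))

lemma eval_fullAt {n} (E : Y → Y → Prop) (f b vb : Fin n) (v : Fin n → Y) :
    (fullAt f b vb).Eval E v ↔ Full E (v f) (v b) (v vb) := by
  simp only [fullAt, Full, eval_and', eval_ballMem', eval_bexMem', eval_ballSub', eval_mem', eval_imp, eval_kprAt, eval_subAt, Fin.snoc_castSucc, Fin.snoc_last]

lemma fullAt_delta0P {n} (f b vb : Fin n) : (fullAt f b vb).IsDelta0P := by
  exact ⟨⟨kprAt_delta0P _ _ _, subAt_delta0P _ _⟩,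
         ⟨kprAt_delta0P _ _ _, trivial⟩⟩

def rkdAt {n} (a f : Fin n) : SF n :=
  (ordAt a).and <| (fn1At f a).and <| (fn2At f).and <| (fn3At f a).and <|
  .ballMem a <|
  .ballMem f.castSucc <|
  .ballMem (Fin.last (n+1)) <|
  .ballMem (Fin.last (n+2)) <|
  SF.imp (kprAt ((Fin.last (n+1)).castSucc.castSucc)
                ((Fin.last n).castSucc.castSucc.castSucc)
                (Fin.last (n+3)))
    (fullAt (f.castSucc.castSucc.castSucc.castSucc)
            ((Fin.last n).castSucc.castSucc.castSucc)
            (Fin.last (n+3)))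

lemma eval_rkdAt {n} (E : Y → Y → Prop) (a f : Fin n) (v : Fin n → Y) :
    (rkdAt a f).Eval E v ↔ RKD E (v a) (v f) := by
  simp only [rkdAt, RKD, eval_and', eval_ballMem', eval_imp, eval_ordAt, eval_fn1At, eval_fn2At, eval_fn3At, eval_kprAt, eval_fullAt, Fin.snoc_castSucc, Fin.snoc_last]

lemma rkdAt_delta0P {n} (a f : Fin n) : (rkdAt a f).IsDelta0P := by
  exact ⟨ordAt_delta0P _, fn1At_delta0P _ _, fn2At_delta0P _, fn3At_delta0P _ _,
    ⟨kprAt_delta0P _ _ _, fullAt_delta0P _ _ _⟩⟩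

def goodAt {n} (a f b vv x : Fin n) : SF n :=
  (rkdAt a f).and ((SF.mem b a).and ((faAt f b vv).and (SF.mem x vv)))

lemma eval_goodAt {n} (E : Y → Y → Prop) (a f b vv x : Fin n) (v : Fin n → Y) :
    (goodAt a f b vv x).Eval E v ↔ Good E (v a) (v f) (v b) (v vv) (v x) := by
  simp only [goodAt, Good, eval_and', eval_mem', eval_rkdAt, eval_faAt]

lemma goodAt_delta0P {n} (a f b vv x : Fin n) : (goodAt a f b vv x).IsDelta0P :=
  ⟨rkdAt_delta0P _ _, trivial, faAt_delta0P _ _ _, trivial⟩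

/-- `θ(x,t)`: some quadruple `(α,f,β,v)` of elements of `t` witnesses a rank for `x`. -/
def thetaF : SF 2 :=
  .bexMem (1 : Fin 2) <|
  .bexMem ((1 : Fin 2).castSucc) <|
  .bexMem ((1 : Fin 2).castSucc.castSucc) <|
  .bexMem ((1 : Fin 2).castSucc.castSucc.castSucc) <|
  goodAt ((Fin.last 2).castSucc.castSucc.castSucc)
         ((Fin.last 3).castSucc.castSucc)
         ((Fin.last 4).castSucc)
         (Fin.last 5)
         ((0 : Fin 2).castSucc.castSucc.castSucc.castSucc)

lemma eval_thetaF (E : Y → Y → Prop) (v : Fin 2 → Y) :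
    thetaF.Eval E v ↔ GoodT E (v 0) (v 1) := by
  simp only [thetaF, GoodT, eval_bexMem', eval_goodAt, Fin.snoc_castSucc, Fin.snoc_last]

lemma thetaF_delta0P : thetaF.IsDelta0P := goodAt_delta0P _ _ _ _ _

/-! ### Separation formulas -/

/-- `∃ t ∈ c, ∃ x ∈ y0, ∃ a f b vv ∈ t, Good a f b vv x ∧ g ∈ a`  (c = var 0, y0 = var 1, g = var 2). -/
def phiAlpha : SF 3 :=
  .bexMem ((0 : Fin 2).castSucc) <|
  .bexMem ((1 : Fin 2).castSucc.castSucc) <|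
  .bexMem ((Fin.last 3).castSucc) <|
  .bexMem ((Fin.last 3).castSucc.castSucc) <|
  .bexMem ((Fin.last 3).castSucc.castSucc.castSucc) <|
  .bexMem ((Fin.last 3).castSucc.castSucc.castSucc.castSucc) <|
  (goodAt ((Fin.last 5).castSucc.castSucc.castSucc)
          ((Fin.last 6).castSucc.castSucc)
          ((Fin.last 7).castSucc)
          (Fin.last 8)
          ((Fin.last 4).castSucc.castSucc.castSucc.castSucc)).and
  (SF.mem ((Fin.last 2).castSucc.castSucc.castSucc.castSucc.castSucc.castSucc)
          ((Fin.last 5).castSucc.castSucc.castSucc))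

def PhiA (E : Y → Y → Prop) (c y0 g : Y) : Prop :=
  ∃ t, E t c ∧ ∃ x, E x y0 ∧ ∃ a, E a t ∧ ∃ f, E f t ∧ ∃ b, E b t ∧ ∃ vv, E vv t ∧
    (Good E a f b vv x ∧ E g a)

lemma eval_phiAlpha (E : Y → Y → Prop) (v : Fin 3 → Y) :
    phiAlpha.Eval E v ↔ PhiA E (v ((0:Fin 2).castSucc)) (v ((1:Fin 2).castSucc)) (v (Fin.last 2)) := by
  simp only [phiAlpha, PhiA, eval_bexMem', eval_and', eval_mem', eval_goodAt,
    Fin.snoc_castSucc, Fin.snoc_last]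

lemma phiAlpha_delta0P : phiAlpha.IsDelta0P := ⟨goodAt_delta0P _ _ _ _ _, trivial⟩

/-- same but final conjunct `q ∈ f` (c = var 0, y0 = var 1, q = var 2). -/
def phiFq : SF 3 :=
  .bexMem ((0 : Fin 2).castSucc) <|
  .bexMem ((1 : Fin 2).castSucc.castSucc) <|
  .bexMem ((Fin.last 3).castSucc) <|
  .bexMem ((Fin.last 3).castSucc.castSucc) <|
  .bexMem ((Fin.last 3).castSucc.castSucc.castSucc) <|
  .bexMem ((Fin.last 3).castSucc.castSucc.castSucc.castSucc) <|
  (goodAt ((Fin.last 5).castSucc.castSucc.castSucc)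
          ((Fin.last 6).castSucc.castSucc)
          ((Fin.last 7).castSucc)
          (Fin.last 8)
          ((Fin.last 4).castSucc.castSucc.castSucc.castSucc)).and
  (SF.mem ((Fin.last 2).castSucc.castSucc.castSucc.castSucc.castSucc.castSucc)
          ((Fin.last 6).castSucc.castSucc))

def PhiF (E : Y → Y → Prop) (c y0 q : Y) : Prop :=
  ∃ t, E t c ∧ ∃ x, E x y0 ∧ ∃ a, E a t ∧ ∃ f, E f t ∧ ∃ b, E b t ∧ ∃ vv, E vv t ∧
    (Good E a f b vv x ∧ E q f)

lemma eval_phiFq (E : Y → Y → Prop) (v : Fin 3 → Y) :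
    phiFq.Eval E v ↔ PhiF E (v ((0:Fin 2).castSucc)) (v ((1:Fin 2).castSucc)) (v (Fin.last 2)) := by
  simp only [phiFq, PhiF, eval_bexMem', eval_and', eval_mem', eval_goodAt,
    Fin.snoc_castSucc, Fin.snoc_last]

lemma phiFq_delta0P : phiFq.IsDelta0P := ⟨goodAt_delta0P _ _ _ _ _, trivial⟩

/-- `∃ g ∈ astar, ∃ q ∈ F, ∃ w ∈ q, ∃ vg ∈ w, KPr q g vg ∧ u ⊆ vg`
    (astar = var 0, F = var 1, u = var 2). -/
def phiV : SF 3 :=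
  .bexMem ((0 : Fin 2).castSucc) <|
  .bexMem ((1 : Fin 2).castSucc.castSucc) <|
  .bexMem (Fin.last 4) <|
  .bexMem (Fin.last 5) <|
  (kprAt ((Fin.last 4).castSucc.castSucc)
         ((Fin.last 3).castSucc.castSucc.castSucc)
         (Fin.last 6)).and
  (subAt ((Fin.last 2).castSucc.castSucc.castSucc.castSucc) (Fin.last 6))

def PhiV (E : Y → Y → Prop) (astar F u : Y) : Prop :=
  ∃ g, E g astar ∧ ∃ q, E q F ∧ ∃ w, E w q ∧ ∃ vg, E vg w ∧
    (KPr E q g vg ∧ SubE E u vg)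

lemma eval_phiV (E : Y → Y → Prop) (v : Fin 3 → Y) :
    phiV.Eval E v ↔ PhiV E (v ((0:Fin 2).castSucc)) (v ((1:Fin 2).castSucc)) (v (Fin.last 2)) := by
  simp only [phiV, PhiV, eval_bexMem', eval_and', eval_kprAt, eval_subAt,
    Fin.snoc_castSucc, Fin.snoc_last]

lemma phiV_delta0P : phiV.IsDelta0P := ⟨kprAt_delta0P _ _ _, subAt_delta0P _ _⟩

/-- disagreement formula (f = var 0, f' = var 1, a' = var 2, b = var 3). -/
def phiD : SF 4 :=
  (SF.mem (Fin.last 3) ((2 : Fin 3).castSucc)).and <|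
  .bexMem ((0 : Fin 3).castSucc) <|
  .bexMem (Fin.last 4) <|
  .bexMem (Fin.last 5) <|
  .bexMem ((1 : Fin 3).castSucc.castSucc.castSucc.castSucc) <|
  .bexMem (Fin.last 7) <|
  .bexMem (Fin.last 8) <|
  (kprAt ((Fin.last 4).castSucc.castSucc.castSucc.castSucc.castSucc)
         ((Fin.last 3).castSucc.castSucc.castSucc.castSucc.castSucc.castSucc)
         ((Fin.last 6).castSucc.castSucc.castSucc)).and <|
  (kprAt ((Fin.last 7).castSucc.castSucc)
         ((Fin.last 3).castSucc.castSucc.castSucc.castSucc.castSucc.castSucc)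
         (Fin.last 9)).and <|
  SF.not (SF.eq ((Fin.last 6).castSucc.castSucc.castSucc) (Fin.last 9))

def PhiD (E : Y → Y → Prop) (f f' a' b : Y) : Prop :=
  E b a' ∧ ∃ q, E q f ∧ ∃ w, E w q ∧ ∃ vv, E vv w ∧ ∃ q', E q' f' ∧ ∃ w', E w' q' ∧
    ∃ vv', E vv' w' ∧ (KPr E q b vv ∧ KPr E q' b vv' ∧ ¬ vv = vv')

lemma eval_phiD (E : Y → Y → Prop) (v : Fin 4 → Y) :
    phiD.Eval E v ↔ PhiD E (v ((0:Fin 3).castSucc)) (v ((1:Fin 3).castSucc))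
      (v ((2:Fin 3).castSucc)) (v (Fin.last 3)) := by
  simp only [phiD, PhiD, eval_and', eval_bexMem', eval_not', eval_eq', eval_mem', eval_kprAt,
    Fin.snoc_castSucc, Fin.snoc_last]

lemma phiD_delta0P : phiD.IsDelta0P :=
  ⟨trivial, kprAt_delta0P _ _ _, kprAt_delta0P _ _ _, trivial⟩

/-! ### Removing `⊆`-bounded quantifiers using a powerset parameter -/

/-- Rewrite `⊆`-bounded quantifiers as `∈`-bounded by a new variable `B`
(placed at position 0). -/
def unP : {n : ℕ} → SF n → SF (n + 1)
  | _, .mem i j => .mem i.succ j.succ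
  | _, .eq i j => .eq i.succ j.succ
  | _, .not φ => .not (unP φ)
  | _, .and φ ψ => .and (unP φ) (unP ψ)
  | _, .or φ ψ => .or (unP φ) (unP ψ)
  | _, .bexMem i φ => .bexMem i.succ (unP φ)
  | _, .ballMem i φ => .ballMem i.succ (unP φ)
  | n, .bexSub i φ => .bexMem 0 ((subAt (Fin.last (n+1)) i.succ.castSucc).and (unP φ))
  | n, .ballSub i φ => .ballMem 0 (SF.imp (subAt (Fin.last (n+1)) i.succ.castSucc) (unP φ))
  | _, .ex φ => .ex (unP φ)
  | _, .all φ => .all (unP φ)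

lemma unP_delta0 : ∀ {n : ℕ} (φ : SF n), φ.IsDelta0P → (unP φ).IsDelta0
  | _, .mem _ _, _ => trivial
  | _, .eq _ _, _ => trivial
  | _, .not φ, h => unP_delta0 φ h
  | _, .and φ ψ, h => ⟨unP_delta0 φ h.1, unP_delta0 ψ h.2⟩
  | _, .or φ ψ, h => ⟨unP_delta0 φ h.1, unP_delta0 ψ h.2⟩
  | _, .bexMem _ φ, h => unP_delta0 φ h
  | _, .ballMem _ φ, h => unP_delta0 φ h
  | _, .bexSub _ φ, h => ⟨trivial, unP_delta0 φ h⟩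
  | _, .ballSub _ φ, h => ⟨trivial, unP_delta0 φ h⟩

lemma cons_snoc_comm {n : ℕ} (B : Y) (v : Fin n → Y) (x : Y) :
    (Fin.snoc (Fin.cons B v) x : Fin (n+2) → Y) = Fin.cons B (Fin.snoc v x) :=
  (Fin.cons_snoc_eq_snoc_cons B v x).symm

lemma eval_unP (E : Y → Y → Prop) (t B : Y) (ht : Trn E t)
    (hB : ∀ z, E z B ↔ SubE E z t) :
    ∀ {n : ℕ} (φ : SF n), φ.IsDelta0P → ∀ (v : Fin n → Y), (∀ i, SubE E (v i) t) →
      ((unP φ).Eval E (Fin.cons B v) ↔ φ.Eval E v)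
  | _, .mem i j, _, v, _ => Iff.rfl
  | _, .eq i j, _, v, _ => Iff.rfl
  | _, .not φ, h, v, hv => by
      simpa [unP] using not_congr (eval_unP E t B ht hB φ h v hv)
  | _, .and φ ψ, h, v, hv => by
      simpa [unP] using and_congr (eval_unP E t B ht hB φ h.1 v hv) (eval_unP E t B ht hB ψ h.2 v hv)
  | _, .or φ ψ, h, v, hv => by
      simpa [unP] using or_congr (eval_unP E t B ht hB φ h.1 v hv) (eval_unP E t B ht hB ψ h.2 v hv)
  | _, .bexMem i φ, h, v, hv => by
      simp only [unP, eval_bexMem', Fin.cons_succ]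
      refine exists_congr fun x => and_congr_right fun hx => ?_
      rw [cons_snoc_comm]
      refine eval_unP E t B ht hB φ h _ (fun j => ?_)
      refine Fin.lastCases ?_ (fun k => ?_) j
      · rw [Fin.snoc_last]; exact fun z hz => ht _ (hv i _ hx) _ hz
      · rw [Fin.snoc_castSucc]; exact hv k
  | _, .ballMem i φ, h, v, hv => by
      simp only [unP, eval_ballMem', Fin.cons_succ]
      refine forall_congr' fun x => imp_congr_right fun hx => ?_
      rw [cons_snoc_comm]
      refine eval_unP E t B ht hB φ h _ (fun j => ?_)
      refine Fin.lastCases ?_ (fun k => ?_) j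
      · rw [Fin.snoc_last]; exact fun z hz => ht _ (hv i _ hx) _ hz
      · rw [Fin.snoc_castSucc]; exact hv k
  | _, .bexSub i φ, h, v, hv => by
      simp only [unP, eval_bexMem', eval_and', eval_subAt, Fin.cons_zero,
        Fin.snoc_last, Fin.snoc_castSucc, Fin.cons_succ]
      constructor
      · rintro ⟨x, hxB, hsub, hφ⟩
        refine ⟨x, hsub, ?_⟩
        rw [cons_snoc_comm] at hφ
        exact (eval_unP E t B ht hB φ h _ (fun j => Fin.lastCases
          (by rw [Fin.snoc_last]; exact (hB x).mp hxB)
          (fun k => by rw [Fin.snoc_castSucc]; exact hv k) j)).mp hφ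
      · rintro ⟨x, hsub, hφ⟩
        have hxt : SubE E x t := fun z hz => hv i _ (hsub _ hz)
        refine ⟨x, (hB x).mpr hxt, hsub, ?_⟩
        rw [cons_snoc_comm]
        exact (eval_unP E t B ht hB φ h _ (fun j => Fin.lastCases
          (by rw [Fin.snoc_last]; exact hxt)
          (fun k => by rw [Fin.snoc_castSucc]; exact hv k) j)).mpr hφ
  | _, .ballSub i φ, h, v, hv => by
      simp only [unP, eval_ballMem', eval_imp, eval_subAt, Fin.cons_zero,
        Fin.snoc_last, Fin.snoc_castSucc, Fin.cons_succ]
      constructor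
      · intro H x hsub
        have hxt : SubE E x t := fun z hz => hv i _ (hsub _ hz)
        have := H x ((hB x).mpr hxt) hsub
        rw [cons_snoc_comm] at this
        exact (eval_unP E t B ht hB φ h _ (fun j => Fin.lastCases
          (by rw [Fin.snoc_last]; exact hxt)
          (fun k => by rw [Fin.snoc_castSucc]; exact hv k) j)).mp this
      · intro H x hxB hsub
        rw [cons_snoc_comm]
        exact (eval_unP E t B ht hB φ h _ (fun j => Fin.lastCases
          (by rw [Fin.snoc_last]; exact (hB x).mp hxB)
          (fun k => by rw [Fin.snoc_castSucc]; exact hv k) j)).mpr (H x hsub)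

/-! ### Working inside a model of `KP^𝒫` -/

section Model
variable {Y : Type u} {E : Y → Y → Prop}

lemma hExt (h : ModelKPP E) : ExtensionalityAx E := h.1.1.1
lemma hPair (h : ModelKPP E) : PairAx E := h.1.1.2.2.1
lemma hUnion (h : ModelKPP E) : UnionAx E := h.1.1.2.2.2.1
lemma hTCo (h : ModelKPP E) : TCoAx E := h.1.1.2.2.2.2.2.1
lemma hSep (h : ModelKPP E) : SeparationScheme E Delta0C := h.1.1.2.2.2.2.2.2.2.1
lemma hSetFound (h : ModelKPP E) : SetFoundationAx E := h.1.1.2.2.2.2.2.2.2.2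
lemma hPow (h : ModelKPP E) : PowerAx E := h.1.2
lemma hColl (h : ModelKPP E) : CollectionScheme E Delta0PC := h.2.1
lemma hFound (h : ModelKPP E) : FoundationScheme E Pi1PC := h.2.2

/-- unordered pair -/
lemma exists_upr (h : ModelKPP E) (x y : Y) : ∃ a, ∀ z, E z a ↔ (z = x ∨ z = y) :=
  hPair h x y

lemma exists_binU (h : ModelKPP E) (a b : Y) : ∃ u, ∀ z, E z u ↔ (E z a ∨ E z b) := by
  obtain ⟨p, hp⟩ := exists_upr h a b
  obtain ⟨u, hu⟩ := hUnion h p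
  refine ⟨u, fun z => ?_⟩
  rw [hu]
  constructor
  · rintro ⟨w, hwp, hzw⟩
    rcases (hp w).mp hwp with rfl | rfl
    · exact Or.inl hzw
    · exact Or.inr hzw
  · rintro (hz | hz)
    · exact ⟨a, (hp a).mpr (Or.inl rfl), hz⟩
    · exact ⟨b, (hp b).mpr (Or.inr rfl), hz⟩

lemma exists_kpr (h : ModelKPP E) (x y : Y) : ∃ p, KPr E p x y := by
  obtain ⟨s1, hs1⟩ := exists_upr h x x
  obtain ⟨s2, hs2⟩ := exists_upr h x y
  obtain ⟨p, hp⟩ := exists_upr h s1 s2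
  have hS : Sng E s1 x := ⟨(hs1 x).mpr (Or.inl rfl), fun w hw => ((hs1 w).mp hw).elim id id⟩
  have hU : Upr E s2 x y :=
    ⟨(hs2 x).mpr (Or.inl rfl), (hs2 y).mpr (Or.inr rfl), fun w hw => (hs2 w).mp hw⟩
  refine ⟨p, ⟨s1, (hp s1).mpr (Or.inl rfl), hS⟩, ⟨s2, (hp s2).mpr (Or.inr rfl), hU⟩, ?_⟩
  intro z hz
  rcases (hp z).mp hz with rfl | rfl
  · exact Or.inl hS
  · exact Or.inr hU

lemma no_self_mem (h : ModelKPP E) (x : Y) : ¬ E x x := by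
  intro hx
  obtain ⟨s, hs⟩ := exists_upr h x x
  obtain ⟨m, hms, hmin⟩ := hSetFound h s ⟨x, (hs x).mpr (Or.inl rfl)⟩
  have hm : m = x := by rcases (hs m).mp hms with hh | hh <;> exact hh
  exact hmin x (by rw [hm]; exact hx) ((hs x).mpr (Or.inl rfl))

lemma no_two_cycle (h : ModelKPP E) (x y : Y) : ¬ (E x y ∧ E y x) := by
  rintro ⟨hxy, hyx⟩
  obtain ⟨s, hs⟩ := exists_upr h x y
  obtain ⟨m, hms, hmin⟩ := hSetFound h s ⟨x, (hs x).mpr (Or.inl rfl)⟩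
  rcases (hs m).mp hms with hh | hh
  · exact hmin y (by rw [hh]; exact hyx) ((hs y).mpr (Or.inr rfl))
  · exact hmin x (by rw [hh]; exact hxy) ((hs x).mpr (Or.inl rfl))

/-- Kuratowski pairs determine their components (no axioms needed). -/
lemma kpr_inj {p x y x' y' : Y} (h1 : KPr E p x y) (h2 : KPr E p x' y') :
    x = x' ∧ y = y' := by
  obtain ⟨⟨s, hsp, hs⟩, ⟨u, hup, hu⟩, hall⟩ := h1
  obtain ⟨⟨s', hsp', hs'⟩, ⟨u', hup', hu'⟩, hall'⟩ := h2
  have hxx : x = x' := by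
    rcases hall' s hsp with hS | hU
    · exact hS.2 x hs.1
    · rcases hU.2.2 x hs.1 with hh | hh
      · exact hh
      · exact (hs.2 x' hU.1).symm
  have hyy : y = y' := by
    rcases hall u' hup' with hS' | hU'
    · have h1' : y' = x := hS'.2 y' hu'.2.1
      rcases hall' u hup with hS | hU
      · have hthis : y = x' := hS.2 y hu.2.1
        rw [hthis, ← hxx]; exact h1'.symm
      · rcases hU.2.2 y hu.2.1 with hh | hh
        · rw [hh, ← hxx]; exact h1'.symm
        · exact hh
    · rcases hU'.2.2 y' hu'.2.1 with hh | hh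
      · rcases hall' u hup with hS | hU
        · have hthis : y = x' := hS.2 y hu.2.1
          rw [hthis, ← hxx]; exact hh.symm
        · rcases hU.2.2 y hu.2.1 with h2 | h2
          · rw [h2, ← hxx]; exact hh.symm
          · exact h2
      · exact hh.symm
  exact ⟨hxx, hyy⟩

lemma fax_unique (h : ModelKPP E) {f a x v v' : Y} (hrkd : RKD E a f)
    (h1 : FAx E f x v) (h2 : FAx E f x v') : v = v' := by
  obtain ⟨q, hq, hk⟩ := h1
  obtain ⟨q', hq', hk'⟩ := h2
  obtain ⟨⟨s, hsq, hs⟩, ⟨u, huq, hu⟩, h3⟩ := id hk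
  obtain ⟨⟨s', hsq', hs'⟩, ⟨u', huq', hu'⟩, h3'⟩ := id hk'
  exact hrkd.2.2.1 q hq q' hq' s hsq x hs.1 u huq v hu.2.1
    s' hsq' x hs'.1 u' huq' v' hu'.2.1 hk hk' rfl

/-- finitely many parameters fit in one set -/
lemma gather (h : ModelKPP E) : ∀ {n : ℕ} (p : Fin n → Y) (w : Y),
    ∃ g, E w g ∧ ∀ i, E (p i) g := by
  intro n
  induction n with
  | zero =>
    intro p w
    obtain ⟨g, hg⟩ := exists_upr h w w
    exact ⟨g, (hg w).mpr (Or.inl rfl), fun i => i.elim0⟩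
  | succ m ih =>
    intro p w
    obtain ⟨g', hwg', hg'⟩ := ih (p ∘ Fin.castSucc) w
    obtain ⟨s, hs⟩ := exists_upr h (p (Fin.last m)) (p (Fin.last m))
    obtain ⟨g, hg⟩ := exists_binU h g' s
    refine ⟨g, (hg w).mpr (Or.inl hwg'), fun i => ?_⟩
    refine Fin.lastCases ?_ (fun k => ?_) i
    · exact (hg _).mpr (Or.inr ((hs _).mpr (Or.inl rfl)))
    · exact (hg _).mpr (Or.inl (hg' k))

/-- `Δ₀^𝒫`-separation. -/
lemma sepP (h : ModelKPP E) {n : ℕ} (φ : SF (n+1)) (hφ : φ.IsDelta0P)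
    (p : Fin n → Y) (w : Y) :
    ∃ s, ∀ x, E x s ↔ (E x w ∧ φ.Eval E (Fin.snoc p x)) := by
  obtain ⟨g, hwg, hpg⟩ := gather h p w
  obtain ⟨t, ht, hgt⟩ := hTCo h g
  obtain ⟨B, hB⟩ := hPow h t
  obtain ⟨s, hs⟩ := hSep h (n+1) (unP φ) (unP_delta0 φ hφ) (Fin.cons B p) w
  refine ⟨s, fun x => (hs x).trans (and_congr_right fun hxw => ?_)⟩
  rw [show (Fin.snoc (Fin.cons B p) x : Fin (n+2) → Y) = Fin.cons B (Fin.snoc p x) from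
    cons_snoc_comm B p x]
  refine eval_unP E t B ht hB φ hφ _ (fun i => ?_)
  refine Fin.lastCases ?_ (fun k => ?_) i
  · rw [Fin.snoc_last]; exact fun z hz => ht x (ht w (hgt w hwg) x hxw) z hz
  · rw [Fin.snoc_castSucc]; exact fun z hz => ht _ (hgt _ (hpg k)) z hz

end Model

section Model2
variable {Y : Type u} {E : Y → Y → Prop}

/-- Any two internal rank-hierarchies agree wherever both are defined. -/
lemma coherent (h : ModelKPP E) {a f a' f' b v v' : Y}
    (h1 : RKD E a f) (h2 : RKD E a' f') (hb : E b a) (hb' : E b a')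
    (hv : FAx E f b v) (hv' : FAx E f' b v') : v = v' := by
  by_contra hne
  obtain ⟨D, hD0⟩ := sepP h phiD phiD_delta0P ![f, f', a'] a
  have hDc : ∀ β, E β D ↔ (E β a ∧ PhiD E f f' a' β) := by
    intro β
    rw [hD0 β, eval_phiD]
    simp only [Fin.snoc_castSucc, Fin.snoc_last, Matrix.cons_val_zero, Matrix.cons_val_one,
      Matrix.cons_val_two, Matrix.head_cons, Matrix.tail_cons]
  have hbD : E b D := by
    obtain ⟨q, hq, hk⟩ := hv
    obtain ⟨q', hq', hk'⟩ := hv'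
    obtain ⟨w, hwq, hu⟩ := hk.2.1
    obtain ⟨w', hwq', hu'⟩ := hk'.2.1
    exact (hDc b).mpr ⟨hb, hb', q, hq, w, hwq, v, hu.2.1, q', hq', w', hwq', v', hu'.2.1,
      hk, hk', hne⟩
  obtain ⟨m, hmD, hmin⟩ := hSetFound h D ⟨b, hbD⟩
  obtain ⟨hma, hma', q, hqf, w, hwq, vm, hvmw, q', hq'f', w', hw'q', vm', hvm'w',
    hk1, hk2, hnevm⟩ := (hDc m).mp hmD
  have hfull : Full E f m vm := h1.2.2.2.2 m hma q hqf w hwq vm hvmw hk1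
  have hfull' : Full E f' m vm' := h2.2.2.2.2 m hma' q' hq'f' w' hw'q' vm' hvm'w' hk2
  -- values of f and f' agree on members of m
  have key : ∀ g vg vg', E g m → FAx E f g vg → FAx E f' g vg' → vg = vg' := by
    intro g vg vg' hgm hfg hfg'
    by_contra hgne
    apply hmin g hgm
    obtain ⟨q1, hq1, hk1'⟩ := hfg
    obtain ⟨q2, hq2, hk2'⟩ := hfg'
    obtain ⟨w1, hw1, hu1⟩ := hk1'.2.1
    obtain ⟨w2, hw2, hu2⟩ := hk2'.2.1
    exact (hDc g).mpr ⟨h1.1.1 m hma g hgm, h2.1.1 m hma' g hgm,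
      q1, hq1, w1, hw1, vg, hu1.2.1, q2, hq2, w2, hw2, vg', hu2.2.1, hk1', hk2', hgne⟩
  have heq : vm = vm' := by
    apply hExt h
    intro z
    constructor
    · intro hz
      obtain ⟨g, hgm, q1, hq1, w1, hw1, vg, hvg, hkg, hsub⟩ := hfull.1 z hz
      obtain ⟨q2, hq2, w2, hw2, vg2, hvg2, hkg2⟩ := h2.2.2.2.1 g (h2.1.1 m hma' g hgm)
      have : vg = vg2 := key g vg vg2 hgm ⟨q1, hq1, hkg⟩ ⟨q2, hq2, hkg2⟩
      exact hfull'.2 g hgm q2 hq2 w2 hw2 vg2 hvg2 hkg2 z (this ▸ hsub)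
    · intro hz
      obtain ⟨g, hgm, q2, hq2, w2, hw2, vg', hvg', hkg2, hsub⟩ := hfull'.1 z hz
      obtain ⟨q1, hq1, w1, hw1, vg1, hvg1, hkg1⟩ := h1.2.2.2.1 g (h1.1.1 m hma g hgm)
      have : vg1 = vg' := key g vg1 vg' hgm ⟨q1, hq1, hkg1⟩ ⟨q2, hq2, hkg2⟩
      exact hfull.2 g hgm q1 hq1 w1 hw1 vg1 hvg1 hkg1 z (this.symm ▸ hsub)
  exact hnevm heq

end Model2

section Model3
variable {Y : Type u} {E : Y → Y → Prop}

/-- In a model of `KP^𝒫`, every set appears in some stage of an internal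
rank hierarchy. -/
lemma exists_rank (h : ModelKPP E) (y : Y) :
    ∃ a f b v, RKD E a f ∧ E b a ∧ FAx E f b v ∧ E y v := by
  by_contra hno
  have hGT : ∀ t, ¬ GoodT E y t := by
    rintro t ⟨a, _, f, _, b, _, v, _, hg⟩
    exact hno ⟨a, f, b, v, hg.1, hg.2.1, hg.2.2.1, hg.2.2.2⟩
  have hev : ∀ (p : Fin 0 → Y) (z u : Y),
      ((SF.not thetaF).Eval E (Fin.snoc (Fin.snoc p z) u) ↔ ¬ GoodT E z u) := by
    intro p z u
    rw [eval_not', eval_thetaF]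
    exact Iff.rfl
  have hevAll : ∀ (p : Fin 0 → Y) (z : Y),
      ((SF.all (SF.not thetaF)).Eval E (Fin.snoc p z) ↔ ∀ u, ¬ GoodT E z u) := by
    intro p z
    rw [eval_all']
    exact forall_congr' fun u => hev p z u
  obtain ⟨y0, hy0, hy0min⟩ := hFound h 0 (SF.all (SF.not thetaF))
    ⟨SF.not thetaF, thetaF_delta0P, rfl⟩ (fun i => i.elim0)
    ⟨y, (hevAll _ y).mpr hGT⟩
  have hy0GT : ∀ t, ¬ GoodT E y0 t := (hevAll _ y0).mp hy0
  have hy0mem : ∀ x, E x y0 → ∃ t, GoodT E x t := by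
    intro x hx
    by_contra hnx
    push_neg at hnx
    exact hy0min x hx ((hevAll _ x).mpr hnx)
  -- collect witnessing tuples
  obtain ⟨c, hc⟩ := hColl h 0 thetaF thetaF_delta0P (fun i => i.elim0) y0
    (fun x hx => by
      obtain ⟨t, ht⟩ := hy0mem x hx
      exact ⟨t, by rw [eval_thetaF]; exact ht⟩)
  have hc' : ∀ x, E x y0 → ∃ t, E t c ∧ GoodT E x t := by
    intro x hx
    obtain ⟨t, htc, ht⟩ := hc x hx
    rw [eval_thetaF] at ht
    exact ⟨t, htc, ht⟩
  clear hc
  -- a transitive set containing c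
  obtain ⟨sc, hsc⟩ := exists_upr h c c
  obtain ⟨t2, ht2, hsct2⟩ := hTCo h sc
  have hct2 : E c t2 := hsct2 c ((hsc c).mpr (Or.inl rfl))
  -- the union of the collected ordinals
  obtain ⟨astar, hastar0⟩ := sepP h phiAlpha phiAlpha_delta0P ![c, y0] t2
  have hastar : ∀ g, E g astar ↔ PhiA E c y0 g := by
    intro g
    rw [hastar0 g, eval_phiAlpha]
    simp only [Fin.snoc_castSucc, Fin.snoc_last, Matrix.cons_val_zero, Matrix.cons_val_one,
      Matrix.head_cons]
    constructor
    · exact fun hp => hp.2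
    · intro hp
      refine ⟨?_, hp⟩
      obtain ⟨t, htc, x, hx, a, hat, f, hft, b, hbt, vv, hvvt, hgood, hga⟩ := hp
      exact ht2 a (ht2 t (ht2 c hct2 t htc) a hat) g hga
  -- the union of the collected hierarchies
  obtain ⟨F, hF0⟩ := sepP h phiFq phiFq_delta0P ![c, y0] t2
  have hFch : ∀ q, E q F ↔ PhiF E c y0 q := by
    intro q
    rw [hF0 q, eval_phiFq]
    simp only [Fin.snoc_castSucc, Fin.snoc_last, Matrix.cons_val_zero, Matrix.cons_val_one,
      Matrix.head_cons]
    constructor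
    · exact fun hp => hp.2
    · intro hp
      refine ⟨?_, hp⟩
      obtain ⟨t, htc, x, hx, a, hat, f, hft, b, hbt, vv, hvvt, hgood, hqf⟩ := hp
      exact ht2 f (ht2 t (ht2 c hct2 t htc) f hft) q hqf
  have hOrdAstar : OrdP E astar := by
    constructor
    · intro g hg z hz
      rw [hastar] at hg ⊢
      obtain ⟨t, htc, x, hx, a, hat, f, hft, b, hbt, vv, hvvt, hgood, hga⟩ := hg
      exact ⟨t, htc, x, hx, a, hat, f, hft, b, hbt, vv, hvvt, hgood, hgood.1.1.1 g hga z hz⟩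
    · intro g hg
      rw [hastar] at hg
      obtain ⟨t, _, x, _, a, _, f, _, b, _, vv, _, hgood, hga⟩ := hg
      exact hgood.1.1.2 g hga
  have hFval : ∀ g, E g astar → ∃ q, E q F ∧ ∃ w, E w q ∧ ∃ vg, E vg w ∧ KPr E q g vg := by
    intro g hg
    rw [hastar] at hg
    obtain ⟨t, htc, x, hx, a, hat, f, hft, b, hbt, vv, hvvt, hgood, hga⟩ := hg
    obtain ⟨q, hqf, w, hwq, vg, hvgw, hk⟩ := hgood.1.2.2.2.1 g hga
    refine ⟨q, ?_, w, hwq, vg, hvgw, hk⟩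
    rw [hFch]
    exact ⟨t, htc, x, hx, a, hat, f, hft, b, hbt, vv, hvvt, hgood, hqf⟩
  have hFuniq : ∀ g vg vg' q q', E q F → E q' F → KPr E q g vg → KPr E q' g vg' →
      vg = vg' := by
    intro g vg vg' q q' hq hq' hk hk'
    rw [hFch] at hq hq'
    obtain ⟨t, htc, x, hx, a, hat, f, hft, b, hbt, vv, hvvt, hgood, hqf⟩ := hq
    obtain ⟨t', htc', x', hx', a', hat', f', hft', b', hbt', vv', hvvt', hgood', hqf'⟩ := hq'
    obtain ⟨u, hu, x0, hx0, w0, hw0, yy, hyy, hk0, hx0a⟩ := hgood.1.2.1 q hqf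
    have hga : E g a := by rw [← (kpr_inj hk0 hk).1]; exact hx0a
    obtain ⟨u', hu', x0', hx0', w0', hw0', yy', hyy', hk0', hx0a'⟩ := hgood'.1.2.1 q' hqf'
    have hga' : E g a' := by rw [← (kpr_inj hk0' hk').1]; exact hx0a'
    exact coherent h hgood.1 hgood'.1 hga hga' ⟨q, hqf, hk⟩ ⟨q', hqf', hk'⟩
  have hmemF_dom : ∀ q g vg, E q F → KPr E q g vg → E g astar := by
    intro q g vg hq hk
    have hq' := hq
    rw [hFch] at hq'
    obtain ⟨t, htc, x, hx, a, hat, f, hft, b, hbt, vv, hvvt, hgood, hqf⟩ := hq'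
    obtain ⟨u, hu, x0, hx0, w0, hw0, yy, hyy, hk0, hx0a⟩ := hgood.1.2.1 q hqf
    rw [hastar]
    refine ⟨t, htc, x, hx, a, hat, f, hft, b, hbt, vv, hvvt, hgood, ?_⟩
    rw [← (kpr_inj hk0 hk).1]; exact hx0a
  have hFn1 : Fn1 E F astar := by
    intro q hq
    have hq' := hq
    rw [hFch] at hq'
    obtain ⟨t, htc, x, hx, a, hat, f, hft, b, hbt, vv, hvvt, hgood, hqf⟩ := hq'
    obtain ⟨u, hu, x0, hx0, w0, hw0, yy, hyy, hk0, hx0a⟩ := hgood.1.2.1 q hqf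
    refine ⟨u, hu, x0, hx0, w0, hw0, yy, hyy, hk0, ?_⟩
    rw [hastar]
    exact ⟨t, htc, x, hx, a, hat, f, hft, b, hbt, vv, hvvt, hgood, hx0a⟩
  have hFn2 : Fn2 E F := by
    intro q hq q' hq' u hu x hxu w hw yv hyv u' hu' x' hx' w' hw' yv' hyv' hk hk' hxx
    subst hxx
    exact hFuniq x yv yv' q q' hq hq' hk hk'
  have hFn3 : Fn3 E F astar := by
    intro g hg
    obtain ⟨q, hqF, w, hwq, vg, hvgw, hk⟩ := hFval g hg
    exact ⟨q, hqF, w, hwq, vg, hvgw, hk⟩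
  have hFull : ∀ b, E b astar → ∀ q, E q F → ∀ w, E w q → ∀ vb, E vb w →
      KPr E q b vb → Full E F b vb := by
    intro b hb q hq w hw vb hvb hk
    have hq' := hq
    rw [hFch] at hq'
    obtain ⟨t, htc, x, hx, a, hat, f, hft, bb, hbbt, vv, hvvt, hgood, hqf⟩ := hq'
    obtain ⟨u0, hu0, x0, hx0, w0, hw0, y0', hy0', hk0, hx0a⟩ := hgood.1.2.1 q hqf
    have hba : E b a := by rw [← (kpr_inj hk0 hk).1]; exact hx0a
    have hfull : Full E f b vb := hgood.1.2.2.2.2 b hba q hqf w hw vb hvb hk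
    constructor
    · intro z hz
      obtain ⟨g, hgb, q1, hq1, w1, hw1, vg, hvgw1, hk1, hsub⟩ := hfull.1 z hz
      refine ⟨g, hgb, q1, ?_, w1, hw1, vg, hvgw1, hk1, hsub⟩
      rw [hFch]
      exact ⟨t, htc, x, hx, a, hat, f, hft, bb, hbbt, vv, hvvt, hgood, hq1⟩
    · intro g hgb q1 hq1F w1 hw1 vg hvgw1 hk1 z hsub
      have hga : E g a := hgood.1.1.1 b hba g hgb
      obtain ⟨q2, hq2f, w2, hw2, vg2, hvg2, hk2⟩ := hgood.1.2.2.2.1 g hga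
      have hq2F : E q2 F := by
        rw [hFch]
        exact ⟨t, htc, x, hx, a, hat, f, hft, bb, hbbt, vv, hvvt, hgood, hq2f⟩
      have hvgeq : vg = vg2 := hFuniq g vg vg2 q1 q2 hq1F hq2F hk1 hk2
      exact hfull.2 g hgb q2 hq2f w2 hw2 vg2 hvg2 hk2 z (hvgeq ▸ hsub)
  -- next stage Vstar
  obtain ⟨sF, hsF⟩ := exists_upr h F F
  obtain ⟨t3, ht3, hsFt3⟩ := hTCo h sF
  have hFt3 : E F t3 := hsFt3 F ((hsF F).mpr (Or.inl rfl))
  obtain ⟨B3, hB3⟩ := hPow h t3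
  obtain ⟨Vstar, hV0⟩ := sepP h phiV phiV_delta0P ![astar, F] B3
  have hVch : ∀ uu, E uu Vstar ↔ PhiV E astar F uu := by
    intro uu
    rw [hV0 uu, eval_phiV]
    simp only [Fin.snoc_castSucc, Fin.snoc_last, Matrix.cons_val_zero, Matrix.cons_val_one,
      Matrix.head_cons]
    constructor
    · exact fun hp => hp.2
    · intro hp
      refine ⟨?_, hp⟩
      obtain ⟨g, hg, q, hq, w, hw, vg, hvg, hk, hsub⟩ := hp
      have hvt : E vg t3 := ht3 w (ht3 q (ht3 F hFt3 q hq) w hw) vg hvg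
      rw [hB3]
      exact fun z hz => ht3 vg hvt z (hsub z hz)
  obtain ⟨Pstar, hP⟩ := hPow h Vstar
  -- successor ordinals
  obtain ⟨sA, hsA⟩ := exists_upr h astar astar
  obtain ⟨a1, ha1⟩ := exists_binU h astar sA
  have ha1c : ∀ z, E z a1 ↔ (E z astar ∨ z = astar) := by
    intro z
    rw [ha1 z]
    constructor
    · rintro (hz | hz)
      · exact Or.inl hz
      · exact Or.inr (((hsA z).mp hz).elim id id)
    · rintro (hz | rfl)
      · exact Or.inl hz
      · exact Or.inr ((hsA _).mpr (Or.inl rfl))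
  obtain ⟨sA1, hsA1⟩ := exists_upr h a1 a1
  obtain ⟨a2, ha2⟩ := exists_binU h a1 sA1
  have ha2c : ∀ z, E z a2 ↔ (E z a1 ∨ z = a1) := by
    intro z
    rw [ha2 z]
    constructor
    · rintro (hz | hz)
      · exact Or.inl hz
      · exact Or.inr (((hsA1 z).mp hz).elim id id)
    · rintro (hz | rfl)
      · exact Or.inl hz
      · exact Or.inr ((hsA1 _).mpr (Or.inl rfl))
  -- the two new pairs
  obtain ⟨p1, hp1⟩ := exists_kpr h astar Vstar
  obtain ⟨p2, hp2⟩ := exists_kpr h a1 Pstar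
  obtain ⟨sp, hsp⟩ := exists_upr h p1 p2
  obtain ⟨F', hF'0⟩ := exists_binU h F sp
  have hF'c : ∀ q, E q F' ↔ (E q F ∨ q = p1 ∨ q = p2) := by
    intro q
    rw [hF'0 q]
    constructor
    · rintro (hz | hz)
      · exact Or.inl hz
      · exact Or.inr ((hsp q).mp hz)
    · rintro (hz | hz)
      · exact Or.inl hz
      · exact Or.inr ((hsp q).mpr hz)
  -- ordinal facts
  have hansa : ¬ E astar astar := no_self_mem h astar
  have hasa1 : E astar a1 := (ha1c astar).mpr (Or.inr rfl)
  have ha1a2 : E a1 a2 := (ha2c a1).mpr (Or.inr rfl)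
  have ha1nastar : ¬ E a1 astar := fun hh => no_two_cycle h a1 astar ⟨hh, hasa1⟩
  have ha1ne : a1 ≠ astar := fun hh => hansa (hh ▸ hasa1)
  have hOrdA2 : OrdP E a2 := by
    constructor
    · intro g hg z hz
      rcases (ha2c g).mp hg with hg1 | he
      · rcases (ha1c g).mp hg1 with hg2 | he
        · exact (ha2c z).mpr (Or.inl ((ha1c z).mpr (Or.inl (hOrdAstar.1 g hg2 z hz))))
        · rw [he] at hz
          exact (ha2c z).mpr (Or.inl ((ha1c z).mpr (Or.inl hz)))
      · rw [he] at hz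
        rcases (ha1c z).mp hz with hz1 | hz1
        · exact (ha2c z).mpr (Or.inl ((ha1c z).mpr (Or.inl hz1)))
        · rw [hz1]
          exact (ha2c astar).mpr (Or.inl hasa1)
    · intro g hg
      rcases (ha2c g).mp hg with hg1 | he
      · rcases (ha1c g).mp hg1 with hg2 | he
        · exact hOrdAstar.2 g hg2
        · rw [he]
          exact hOrdAstar.1
      · rw [he]
        intro w hw z hz
        rcases (ha1c w).mp hw with hw1 | hw1
        · exact (ha1c z).mpr (Or.inl (hOrdAstar.1 w hw1 z hz))
        · rw [hw1] at hz
          exact (ha1c z).mpr (Or.inl hz)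
  -- classification of pairs of F'
  have hFW : ∀ q g vg, E q F' → KPr E q g vg →
      ((E q F ∧ E g astar) ∨ (q = p1 ∧ g = astar ∧ vg = Vstar) ∨
        (q = p2 ∧ g = a1 ∧ vg = Pstar)) := by
    intro q g vg hq hk
    rcases (hF'c q).mp hq with hqF | hq1 | hq2
    · exact Or.inl ⟨hqF, hmemF_dom q g vg hqF hk⟩
    · subst hq1
      obtain ⟨e1, e2⟩ := kpr_inj hp1 hk
      exact Or.inr (Or.inl ⟨rfl, e1.symm, e2.symm⟩)
    · subst hq2
      obtain ⟨e1, e2⟩ := kpr_inj hp2 hk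
      exact Or.inr (Or.inr ⟨rfl, e1.symm, e2.symm⟩)
  have hp1F' : E p1 F' := (hF'c p1).mpr (Or.inr (Or.inl rfl))
  have hp2F' : E p2 F' := (hF'c p2).mpr (Or.inr (Or.inr rfl))
  -- stages of F are included in Vstar
  have hstagesub : ∀ g vg q1, E g astar → E q1 F → KPr E q1 g vg → SubE E vg Vstar := by
    intro g vg q1 hg hq1 hk1 z hzvg
    obtain ⟨w1, hw1, hu1⟩ := hk1.2.1
    have hfl : Full E F g vg := hFull g hg q1 hq1 w1 hw1 vg hu1.2.1 hk1
    obtain ⟨g', hg', q2, hq2, w2, hw2, vg2, hvg2, hk2, hsub2⟩ := hfl.1 z hzvg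
    rw [hVch]
    exact ⟨g', hOrdAstar.1 g hg g' hg', q2, hq2, w2, hw2, vg2, hvg2, hk2, hsub2⟩
  -- Fn clauses for F'
  have hFn1' : Fn1 E F' a2 := by
    intro q hq
    rcases (hF'c q).mp hq with hqF | hq1 | hq2
    · obtain ⟨u, hu, x0, hx0, w0, hw0, yy, hyy, hk0, hx0a⟩ := hFn1 q hqF
      exact ⟨u, hu, x0, hx0, w0, hw0, yy, hyy, hk0,
        (ha2c x0).mpr (Or.inl ((ha1c x0).mpr (Or.inl hx0a)))⟩
    · subst hq1
      obtain ⟨s, hsp1, hsg⟩ := hp1.1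
      obtain ⟨w, hwp1, hwu⟩ := hp1.2.1
      exact ⟨s, hsp1, astar, hsg.1, w, hwp1, Vstar, hwu.2.1, hp1,
        (ha2c astar).mpr (Or.inl hasa1)⟩
    · subst hq2
      obtain ⟨s, hsp2, hsg⟩ := hp2.1
      obtain ⟨w, hwp2, hwu⟩ := hp2.2.1
      exact ⟨s, hsp2, a1, hsg.1, w, hwp2, Pstar, hwu.2.1, hp2, ha1a2⟩
  have hFn2' : Fn2 E F' := by
    intro q hq q' hq' u hu x hxu w hw yv hyv u' hu' x' hx' w' hw' yv' hyv' hk hk' hxx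
    subst hxx
    rcases hFW q x yv hq hk with ⟨hqF, hxa⟩ | ⟨_, e1, e2⟩ | ⟨_, e1, e2⟩ <;>
      rcases hFW q' x yv' hq' hk' with ⟨hqF', hxa'⟩ | ⟨_, e1', e2'⟩ | ⟨_, e1', e2'⟩
    · exact hFuniq x yv yv' q q' hqF hqF' hk hk'
    · exact absurd (e1' ▸ hxa) hansa
    · exact absurd (e1' ▸ hxa) ha1nastar
    · exact absurd (e1 ▸ hxa') hansa
    · rw [e2, e2']
    · exact absurd (e1 ▸ e1' ▸ rfl : a1 = astar) ha1ne
    · exact absurd (e1 ▸ hxa') ha1nastar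
    · exact absurd ((e1.symm.trans e1') : a1 = astar) ha1ne
    · rw [e2, e2']
  have hFn3' : Fn3 E F' a2 := by
    intro g hg
    rcases (ha2c g).mp hg with hg1 | rfl
    · rcases (ha1c g).mp hg1 with hg2 | rfl
      · obtain ⟨q, hqF, w, hwq, vg, hvgw, hk⟩ := hFval g hg2
        exact ⟨q, (hF'c q).mpr (Or.inl hqF), w, hwq, vg, hvgw, hk⟩
      · obtain ⟨w, hwp1, hwu⟩ := hp1.2.1
        exact ⟨p1, hp1F', w, hwp1, Vstar, hwu.2.1, hp1⟩
    · obtain ⟨w, hwp2, hwu⟩ := hp2.2.1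
      exact ⟨p2, hp2F', w, hwp2, Pstar, hwu.2.1, hp2⟩
  -- full clause for F'
  have hFullF' : ∀ b, E b a2 → ∀ q, E q F' → ∀ w, E w q → ∀ vb, E vb w →
      KPr E q b vb → Full E F' b vb := by
    intro b hb q hq w hw vb hvb hk
    rcases hFW q b vb hq hk with ⟨hqF, hbast⟩ | ⟨_, e1, e2⟩ | ⟨_, e1, e2⟩
    · -- old stage
      have hfull : Full E F b vb := hFull b hbast q hqF w hw vb hvb hk
      constructor
      · intro z hz
        obtain ⟨g, hgb, q1, hq1, w1, hw1, vg, hvgw1, hk1, hsub⟩ := hfull.1 z hz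
        exact ⟨g, hgb, q1, (hF'c q1).mpr (Or.inl hq1), w1, hw1, vg, hvgw1, hk1, hsub⟩
      · intro g hgb q1 hq1 w1 hw1 vg hvgw1 hk1 z hsub
        rcases hFW q1 g vg hq1 hk1 with ⟨hq1F, _⟩ | ⟨he0, e1, e2⟩ | ⟨he0, e1, e2⟩
        · exact hfull.2 g hgb q1 hq1F w1 hw1 vg hvgw1 hk1 z hsub
        · exact absurd (⟨e1 ▸ hgb, hbast⟩ : E astar b ∧ E b astar) (no_two_cycle h astar b)
        · exact absurd (e1 ▸ hOrdAstar.1 b hbast g hgb) ha1nastar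
    · -- b = astar, vb = Vstar
      rw [e1, e2]
      constructor
      · intro z hz
        obtain ⟨g, hg, q1, hq1, w1, hw1, vg, hvg, hk1, hsub⟩ := (hVch z).mp hz
        exact ⟨g, hg, q1, (hF'c q1).mpr (Or.inl hq1), w1, hw1, vg, hvg, hk1, hsub⟩
      · intro g hgb q1 hq1 w1 hw1 vg hvgw1 hk1 z hsub
        rcases hFW q1 g vg hq1 hk1 with ⟨hq1F, _⟩ | ⟨_, e1, _⟩ | ⟨_, e1, _⟩
        · exact (hVch z).mpr ⟨g, hgb, q1, hq1F, w1, hw1, vg, hvgw1, hk1, hsub⟩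
        · exact absurd (e1 ▸ hgb) hansa
        · exact absurd (e1 ▸ hgb) ha1nastar
    · -- b = a1, vb = Pstar
      rw [e1, e2]
      constructor
      · intro z hz
        have hzsub : SubE E z Vstar := (hP z).mp hz
        obtain ⟨w0, hwp1, hwu⟩ := hp1.2.1
        exact ⟨astar, hasa1, p1, hp1F', w0, hwp1, Vstar, hwu.2.1, hp1, hzsub⟩
      · intro g hgb q1 hq1 w1 hw1 vg hvgw1 hk1 z hsub
        rw [hP]
        rcases hFW q1 g vg hq1 hk1 with ⟨hq1F, hgast⟩ | ⟨_, e1, e2⟩ | ⟨_, e1, _⟩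
        · exact fun zz hzz => hstagesub g vg q1 hgast hq1F hk1 zz (hsub zz hzz)
        · rw [e2] at hsub; exact hsub
        · exact absurd (e1 ▸ hgb) (no_self_mem h a1)
  have hRKD' : RKD E a2 F' := ⟨hOrdA2, hFn1', hFn2', hFn3', hFullF'⟩
  -- y0 belongs to Pstar
  have hy0V : SubE E y0 Vstar := by
    intro z hz
    obtain ⟨t, htc, a, hat, f, hft, b, hbt, v, hvt, hgood⟩ := hc' z hz
    obtain ⟨hrkd, hba, hfax, hzv⟩ := hgood
    obtain ⟨q, hqf, hkq⟩ := hfax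
    obtain ⟨wq, hwq, huq⟩ := hkq.2.1
    have hfull : Full E f b v := hrkd.2.2.2.2 b hba q hqf wq hwq v huq.2.1 hkq
    obtain ⟨g, hgb, q1, hq1f, w1, hw1, vg, hvgw1, hk1, hsub⟩ := hfull.1 z hzv
    have hga : E g a := hrkd.1.1 b hba g hgb
    have hgast : E g astar := by
      rw [hastar]
      exact ⟨t, htc, z, hz, a, hat, f, hft, b, hbt, v, hvt,
        ⟨hrkd, hba, ⟨q, hqf, hkq⟩, hzv⟩, hga⟩
    have hq1F : E q1 F := by
      rw [hFch]
      exact ⟨t, htc, z, hz, a, hat, f, hft, b, hbt, v, hvt,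
        ⟨hrkd, hba, ⟨q, hqf, hkq⟩, hzv⟩, hq1f⟩
    rw [hVch]
    exact ⟨g, hgast, q1, hq1F, w1, hw1, vg, hvgw1, hk1, hsub⟩
  have hy0P : E y0 Pstar := (hP y0).mpr hy0V
  -- assemble the witnessing tuple and contradict minimality
  obtain ⟨u1, hu1⟩ := exists_upr h a2 F'
  obtain ⟨u2, hu2⟩ := exists_upr h a1 Pstar
  obtain ⟨tnew, htnew⟩ := exists_binU h u1 u2
  apply hy0GT tnew
  exact ⟨a2, (htnew a2).mpr (Or.inl ((hu1 a2).mpr (Or.inl rfl))),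
    F', (htnew F').mpr (Or.inl ((hu1 F').mpr (Or.inr rfl))),
    a1, (htnew a1).mpr (Or.inr ((hu2 a1).mpr (Or.inl rfl))),
    Pstar, (htnew Pstar).mpr (Or.inr ((hu2 Pstar).mpr (Or.inr rfl))),
    hRKD', ha1a2, ⟨p2, hp2F', hp2⟩, hy0P⟩

end Model3

/-! ### From the internal predicates to `IsRK`/`FunApp` -/

section Convert
variable {Y : Type u} {E : Y → Y → Prop}

lemma isPair_kpr (hpair : PairAx E) {p x y : Y} (hip : IsPair E p x y) : KPr E p x y := by
  obtain ⟨s, hs⟩ := hpair x x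
  obtain ⟨uu, hu⟩ := hpair x y
  have hsp : E s p := (hip s).mpr (Or.inl (fun w => (hs w).trans or_self_iff))
  have hup : E uu p := (hip uu).mpr (Or.inr (fun w => hu w))
  refine ⟨⟨s, hsp, (hs x).mpr (Or.inl rfl), fun w hw => ((hs w).mp hw).elim id id⟩,
    ⟨uu, hup, (hu x).mpr (Or.inl rfl), (hu y).mpr (Or.inr rfl), fun w hw => (hu w).mp hw⟩,
    ?_⟩
  intro z hz
  rcases (hip z).mp hz with hd | hd
  · exact Or.inl ⟨(hd x).mpr rfl, fun w hw => (hd w).mp hw⟩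
  · exact Or.inr ⟨(hd x).mpr (Or.inl rfl), (hd y).mpr (Or.inr rfl), fun w hw => (hd w).mp hw⟩

lemma kpr_isPair (hext : ExtensionalityAx E) {p x y : Y} (hk : KPr E p x y) :
    IsPair E p x y := by
  obtain ⟨⟨s, hsp, hs⟩, ⟨uu, hup, hu⟩, hall⟩ := hk
  intro z
  constructor
  · intro hz
    rcases hall z hz with hS | hU
    · exact Or.inl (fun w => ⟨fun hw => hS.2 w hw, fun hw => hw ▸ hS.1⟩)
    · exact Or.inr (fun w => ⟨fun hw => hU.2.2 w hw,
        fun hw => hw.elim (fun e => e ▸ hU.1) (fun e => e ▸ hU.2.1)⟩)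
  · rintro (hd | hd)
    · have hzs : z = s := hext z s (fun w => (hd w).trans
        ⟨fun e => by rw [e]; exact hs.1, fun hw => hs.2 w hw⟩)
      rw [hzs]; exact hsp
    · have hzu : z = uu := hext z uu (fun w => (hd w).trans
        ⟨fun e => e.elim (fun e1 => by rw [e1]; exact hu.1)
          (fun e1 => by rw [e1]; exact hu.2.1),
         fun hw => hu.2.2 w hw⟩)
      rw [hzu]; exact hup

lemma fax_funApp (hext : ExtensionalityAx E) {f x y : Y} (hfa : FAx E f x y) :
    FunApp E f x y := by
  obtain ⟨q, hq, hk⟩ := hfa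
  exact ⟨q, hq, kpr_isPair hext hk⟩

lemma rkd_isRK (h : ModelKPP E) {a f : Y} (hr : RKD E a f) : IsRK E a f := by
  have hext := hExt h
  have hpair := hPair h
  refine ⟨⟨hr.1.1, hr.1.2⟩, ⟨?_, ?_, ?_⟩, ?_⟩
  · intro q hq
    obtain ⟨u, hu, x, hx, w, hw, yy, hyy, hk, hxd⟩ := hr.2.1 q hq
    exact ⟨x, yy, kpr_isPair hext hk, hxd⟩
  · intro x yy yy' h1 h2
    exact fax_unique h hr ⟨h1.choose, h1.choose_spec.1, isPair_kpr hpair h1.choose_spec.2⟩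
      ⟨h2.choose, h2.choose_spec.1, isPair_kpr hpair h2.choose_spec.2⟩
  · intro x hx
    obtain ⟨q, hq, w, hw, yy, hyy, hk⟩ := hr.2.2.2.1 x hx
    exact ⟨yy, q, hq, kpr_isPair hext hk⟩
  · intro b vb hb hfa
    obtain ⟨q, hq, hip⟩ := hfa
    have hk := isPair_kpr hpair hip
    obtain ⟨w, hwq, hu⟩ := hk.2.1
    have hfull : Full E f b vb := hr.2.2.2.2 b hb q hq w hwq vb hu.2.1 hk
    intro x
    constructor
    · intro hx
      obtain ⟨g, hg, q1, hq1, w1, hw1, vg, hvg, hk1, hsub⟩ := hfull.1 x hx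
      exact ⟨g, hg, vg, ⟨q1, hq1, kpr_isPair hext hk1⟩, hsub⟩
    · rintro ⟨g, hg, vg, ⟨q1, hq1, hip1⟩, hsub⟩
      have hk1 := isPair_kpr hpair hip1
      obtain ⟨w1, hw1, hu1⟩ := hk1.2.1
      exact hfull.2 g hg q1 hq1 w1 hw1 vg hu1.2.1 hk1 x hsub

end Convert

/-! ### Transfer from a powerset-preserving end extension -/

section Transfer
variable {X : Type u} {E : X → X → Prop} {A : Set X}

lemma sng_up (hend : EndExtSet E A) {a x : A} (hs : Sng (restrict E A) a x) :
    Sng E a.1 x.1 :=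
  ⟨hs.1, fun w hw => congrArg Subtype.val (hs.2 ⟨w, hend w a.1 a.2 hw⟩ hw)⟩

lemma sng_down {a x : A} (hs : Sng E a.1 x.1) : Sng (restrict E A) a x :=
  ⟨hs.1, fun w hw => Subtype.ext (hs.2 w.1 hw)⟩

lemma upr_up (hend : EndExtSet E A) {a x y : A} (hs : Upr (restrict E A) a x y) :
    Upr E a.1 x.1 y.1 :=
  ⟨hs.1, hs.2.1, fun w hw =>
    ((hs.2.2 ⟨w, hend w a.1 a.2 hw⟩ hw).imp (congrArg Subtype.val) (congrArg Subtype.val))⟩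

lemma upr_down {a x y : A} (hs : Upr E a.1 x.1 y.1) : Upr (restrict E A) a x y :=
  ⟨hs.1, hs.2.1, fun w hw => (hs.2.2 w.1 hw).imp Subtype.ext Subtype.ext⟩

lemma kpr_up (hend : EndExtSet E A) {p x y : A} (hk : KPr (restrict E A) p x y) :
    KPr E p.1 x.1 y.1 := by
  obtain ⟨⟨s, hsp, hs⟩, ⟨u, hup, hu⟩, hall⟩ := hk
  refine ⟨⟨s.1, hsp, sng_up hend hs⟩, ⟨u.1, hup, upr_up hend hu⟩, ?_⟩
  intro z hz
  exact (hall ⟨z, hend z p.1 p.2 hz⟩ hz).imp (sng_up hend) (upr_up hend)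

lemma kpr_down (hend : EndExtSet E A) {p x y : A} (hk : KPr E p.1 x.1 y.1) :
    KPr (restrict E A) p x y := by
  obtain ⟨⟨s, hsp, hs⟩, ⟨u, hup, hu⟩, hall⟩ := hk
  have hsA : s ∈ A := hend s p.1 p.2 hsp
  have huA : u ∈ A := hend u p.1 p.2 hup
  refine ⟨⟨⟨s, hsA⟩, hsp, sng_down hs⟩, ⟨⟨u, huA⟩, hup, upr_down hu⟩, ?_⟩
  intro z hz
  exact (hall z.1 hz).imp sng_down upr_down

lemma fax_up (hend : EndExtSet E A) {f x y : A} (hfa : FAx (restrict E A) f x y) :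
    FAx E f.1 x.1 y.1 := by
  obtain ⟨q, hq, hk⟩ := hfa
  exact ⟨q.1, hq, kpr_up hend hk⟩

lemma rkd_up (hend : EndExtSet E A) (hpw : ∀ x y, y ∈ A → SubE E x y → x ∈ A)
    {a f : A} (hr : RKD (restrict E A) a f) : RKD E a.1 f.1 := by
  obtain ⟨⟨htr, hord⟩, h1, h2, h3, h4⟩ := hr
  have haA := a.2
  have hfA := f.2
  refine ⟨⟨?_, ?_⟩, ?_, ?_, ?_, ?_⟩
  · -- transitivity
    intro yy hyy z hz
    have hyA : yy ∈ A := hend yy a.1 a.2 hyy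
    have hzA : z ∈ A := hend z yy hyA hz
    exact htr ⟨yy, hyA⟩ hyy ⟨z, hzA⟩ hz
  · intro yy hyy z hz w hw
    have hyA : yy ∈ A := hend yy a.1 a.2 hyy
    have hzA : z ∈ A := hend z yy hyA hz
    have hwA : w ∈ A := hend w z hzA hw
    exact hord ⟨yy, hyA⟩ hyy ⟨z, hzA⟩ hz ⟨w, hwA⟩ hw
  · -- Fn1
    intro q hq
    have hqA : q ∈ A := hend q f.1 f.2 hq
    obtain ⟨u, hu, x, hx, w, hw, yy, hyy, hk, hxd⟩ := h1 ⟨q, hqA⟩ hq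
    exact ⟨u.1, hu, x.1, hx, w.1, hw, yy.1, hyy, kpr_up hend hk, hxd⟩
  · -- Fn2
    intro q hq q' hq' u hu x hx w hw yy hyy u' hu' x' hx' w' hw' yy' hyy' hk hk' hxx
    have hqA : q ∈ A := hend q f.1 f.2 hq
    have hq'A : q' ∈ A := hend q' f.1 f.2 hq'
    have huA : u ∈ A := hend u q hqA hu
    have hxA : x ∈ A := hend x u huA hx
    have hwA : w ∈ A := hend w q hqA hw
    have hyA : yy ∈ A := hend yy w hwA hyy
    have hu'A : u' ∈ A := hend u' q' hq'A hu'
    have hx'A : x' ∈ A := hend x' u' hu'A hx'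
    have hw'A : w' ∈ A := hend w' q' hq'A hw'
    have hy'A : yy' ∈ A := hend yy' w' hw'A hyy'
    have := h2 ⟨q, hqA⟩ hq ⟨q', hq'A⟩ hq' ⟨u, huA⟩ hu ⟨x, hxA⟩ hx ⟨w, hwA⟩ hw ⟨yy, hyA⟩ hyy
      ⟨u', hu'A⟩ hu' ⟨x', hx'A⟩ hx' ⟨w', hw'A⟩ hw' ⟨yy', hy'A⟩ hyy'
      (kpr_down hend hk) (kpr_down hend hk') (Subtype.ext hxx)
    exact congrArg Subtype.val this
  · -- Fn3
    intro x hx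
    have hxA : x ∈ A := hend x a.1 a.2 hx
    obtain ⟨q, hq, w, hw, yy, hyy, hk⟩ := h3 ⟨x, hxA⟩ hx
    exact ⟨q.1, hq, w.1, hw, yy.1, hyy, kpr_up hend hk⟩
  · -- Full
    intro b hb q hq w hw vb hvb hk
    have hbA : b ∈ A := hend b a.1 a.2 hb
    have hqA : q ∈ A := hend q f.1 f.2 hq
    have hwA : w ∈ A := hend w q hqA hw
    have hvbA : vb ∈ A := hend vb w hwA hvb
    have hfull := h4 ⟨b, hbA⟩ hb ⟨q, hqA⟩ hq ⟨w, hwA⟩ hw ⟨vb, hvbA⟩ hvb (kpr_down hend hk)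
    constructor
    · intro x hx
      have hxA : x ∈ A := hend x vb hvbA hx
      obtain ⟨g, hg, q1, hq1, w1, hw1, vg, hvg, hk1, hsub⟩ := hfull.1 ⟨x, hxA⟩ hx
      refine ⟨g.1, hg, q1.1, hq1, w1.1, hw1, vg.1, hvg, kpr_up hend hk1, ?_⟩
      intro z hz
      exact hsub ⟨z, hend z x hxA hz⟩ hz
    · intro g hg q1 hq1 w1 hw1 vg hvg hk1 x hsub
      have hgA : g ∈ A := hend g b hbA hg
      have hq1A : q1 ∈ A := hend q1 f.1 f.2 hq1
      have hw1A : w1 ∈ A := hend w1 q1 hq1A hw1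
      have hvgA : vg ∈ A := hend vg w1 hw1A hvg
      have hxA : x ∈ A := hpw x vg hvgA hsub
      exact hfull.2 ⟨g, hgA⟩ hg ⟨q1, hq1A⟩ hq1 ⟨w1, hw1A⟩ hw1 ⟨vg, hvgA⟩ hvg
        (kpr_down hend hk1) ⟨x, hxA⟩ (fun z hz => hsub z.1 hz)

end Transfer

end RankExtProof

/-- a powerset-preserving end extension between models of `KP^𝒫`
is a rank extension. -/
theorem rank_ext_of_pow_ext_KPP (X : Type u) (E : X → X → Prop) (A : Set X)
    (hN : ModelKPP E) (hMmod : ModelKPP (restrict E A)) (hpow : PowExtSet E A) :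
    ∀ x y, y ∈ A → RankLe E x y → x ∈ A := by
  intro x y hyA hrk
  obtain ⟨a, f, b, v, hrkd, hba, hfax, hyv⟩ := RankExtProof.exists_rank hMmod ⟨y, hyA⟩
  have hend : EndExtSet E A := hpow.1
  have hpw := hpow.2
  have hrkdE := RankExtProof.rkd_up hend hpw hrkd
  have hIs := RankExtProof.rkd_isRK hN hrkdE
  have hFA := RankExtProof.fax_funApp (RankExtProof.hExt hN) (RankExtProof.fax_up hend hfax)
  have hx : E x v.1 := hrk a.1 f.1 b.1 v.1 hIs hba hFA hyv
  exact hend x v.1 v.2 hx
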